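/- arXiv:1704.01907 — 4 statements merged into one kernel-verified Lean document; each statement's English description precedes it below -/
import Mathlib

section
/- For every assignment of states (occupied or vacant) to the squares of Λ = {1,…,m} × {1,…,n}, exactly one of the following two events occurs: Λ contains an occupied plus connected left-right crossing, or Λ contains a vacant star connected top-down crossing. -/
/-- Star adjacency on squares of the array: share at least a corner. -/
def starAdj (i j : ℤ × ℤ) : Prop := max |i.1 - j.1| |i.2 - j.2| = 1

/-- Plus adjacency on squares of the array: share an edge. -/
def plusAdj (i j : ℤ × ℤ) : Prop := |i.1 - j.1| + |i.2 - j.2| = 1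

/-- Membership in the rectangular array `Λ = {1,…,m} × {1,…,n}`. -/
def inRect (m n : ℤ) (k : ℤ × ℤ) : Prop :=
  1 ≤ k.1 ∧ k.1 ≤ m ∧ 1 ≤ k.2 ∧ k.2 ≤ n

/-- A left-right crossing of `Λ = {1,…,m} × {1,…,n}` with respect to the adjacency
`adj`: a sequence of pairwise distinct squares of `Λ` with consecutive squares
adjacent, whose first square is the unique one with first coordinate `1` and whose
last square is the unique one with first coordinate `m`. -/
def IsLRCrossing (adj : ℤ × ℤ → ℤ × ℤ → Prop) (m n : ℤ) (J : List (ℤ × ℤ)) : Prop :=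
  J ≠ [] ∧ J.Nodup ∧ J.Chain' adj ∧ (∀ k ∈ J, inRect m n k) ∧
  (∀ k ∈ J, (k.1 = 1 ↔ J.head? = some k)) ∧
  (∀ k ∈ J, (k.1 = m ↔ J.getLast? = some k))

/-- A top-down crossing of `Λ = {1,…,m} × {1,…,n}` with respect to the adjacency
`adj`: a sequence of pairwise distinct squares of `Λ` with consecutive squares
adjacent, whose first square is the unique one with second coordinate `n` and whose
last square is the unique one with second coordinate `1`. -/
def IsTDCrossing (adj : ℤ × ℤ → ℤ × ℤ → Prop) (m n : ℤ) (J : List (ℤ × ℤ)) : Prop :=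
  J ≠ [] ∧ J.Nodup ∧ J.Chain' adj ∧ (∀ k ∈ J, inRect m n k) ∧
  (∀ k ∈ J, (k.2 = n ↔ J.head? = some k)) ∧
  (∀ k ∈ J, (k.2 = 1 ↔ J.getLast? = some k))

namespace PercDual
open List

variable {α : Type*} {r : α → α → Prop} {Q P : α → Prop}

lemma glcons {a : α} {t : List α} (h : t ≠ []) : (a :: t).getLast? = t.getLast? := by
  cases t with
  | nil => simp at h
  | cons b u => exact List.getLast?_cons_cons

lemma dlcons {a : α} {t : List α} (h : t ≠ []) : (a :: t).dropLast = a :: t.dropLast := by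
  cases t with
  | nil => simp at h
  | cons b u => rfl

lemma cut_first {Q : α → Prop} :
    ∀ (c : List α), (∃ k ∈ c, Q k) →
      ∃ c₁ : List α, c₁ ≠ [] ∧ c₁.head? = c.head? ∧ c₁ <+: c ∧
        (∃ e, c₁.getLast? = some e ∧ Q e) ∧ ∀ k ∈ c₁.dropLast, ¬ Q k
  | [], h => by simp at h
  | a :: t, hex => by
    by_cases ha : Q a
    · exact ⟨[a], by simp, by simp, ⟨t, by simp⟩, ⟨a, rfl, ha⟩, by simp⟩
    · have hext : ∃ k ∈ t, Q k := by
        rcases hex with ⟨k, hk, hq⟩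
        rcases List.mem_cons.mp hk with rfl | hk
        · exact absurd hq ha
        · exact ⟨k, hk, hq⟩
      obtain ⟨c₂, h1, h2, h3, h4, h5⟩ := cut_first t hext
      refine ⟨a :: c₂, by simp, by simp, ?_, ?_, ?_⟩
      · rcases h3 with ⟨q, hq⟩; exact ⟨q, by rw [← hq]; rfl⟩
      · rcases h4 with ⟨e, he, hqe⟩; exact ⟨e, by rw [glcons h1]; exact he, hqe⟩
      · intro k hk
        rw [dlcons h1] at hk
        rcases List.mem_cons.mp hk with rfl | hk
        · exact ha
        · exact h5 k hk

lemma cut_last {Q : α → Prop} :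
    ∀ (c : List α), (∃ k ∈ c, Q k) →
      ∃ c₁ : List α, c₁ ≠ [] ∧ c₁.getLast? = c.getLast? ∧ c₁ <:+ c ∧
        (∃ e, c₁.head? = some e ∧ Q e) ∧ ∀ k ∈ c₁.tail, ¬ Q k
  | [], h => by simp at h
  | a :: t, hex => by
    by_cases hext : ∃ k ∈ t, Q k
    · obtain ⟨c₂, h1, h2, h3, h4, h5⟩ := cut_last t hext
      have ht : t ≠ [] := by rintro rfl; simp at hext
      exact ⟨c₂, h1, by rw [h2, glcons ht], h3.trans (List.suffix_cons a t), h4, h5⟩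
    · have ha : Q a := by
        rcases hex with ⟨k, hk, hq⟩
        rcases List.mem_cons.mp hk with rfl | hk
        · exact hq
        · exact absurd ⟨k, hk, hq⟩ hext
      exact ⟨a :: t, by simp, rfl, List.suffix_rfl, ⟨a, rfl, ha⟩,
        fun k hk hq => hext ⟨k, hk, hq⟩⟩

lemma toNodup {r : α → α → Prop} :
    ∀ (N : ℕ) (c : List α), c.length ≤ N → c.Chain' r →
      ∃ J : List α, J.Nodup ∧ J.Chain' r ∧ J.head? = c.head? ∧ J.getLast? = c.getLast? ∧
        ∀ k ∈ J, k ∈ c := by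
  intro N
  induction N with
  | zero =>
    intro c hc _
    have : c = [] := List.length_eq_zero_iff.mp (Nat.le_zero.mp hc)
    subst this
    exact ⟨[], by simp [List.Chain']⟩
  | succ N ih =>
    intro c hlen hch
    cases c with
    | nil => exact ⟨[], by simp [List.Chain']⟩
    | cons a t =>
      by_cases hat : a ∈ t
      · obtain ⟨v, w, rfl⟩ := List.append_of_mem hat
        have hsplit : a :: (v ++ a :: w) = (a :: v) ++ (a :: w) := by simp
        have hsuf : (a :: w) <:+ (a :: (v ++ a :: w)) := ⟨a :: v, hsplit.symm⟩
        have hch' : (a :: w).Chain' r := hch.suffix hsuf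
        have hlen' : (a :: w).length ≤ N := by
          simp [List.length_append] at hlen ⊢; omega
        obtain ⟨J, h1, h2, h3, h4, h5⟩ := ih (a :: w) hlen' hch'
        refine ⟨J, h1, h2, by rw [h3]; rfl, ?_, ?_⟩
        · rw [h4, hsplit, List.getLast?_append,
            List.getLast?_eq_getLast (l := a :: w) (by simp)]
          rfl
        · intro k hk
          have := h5 k hk
          simp at this ⊢
          tauto
      · have hch' : t.Chain' r := hch.tail
        have hlen' : t.length ≤ N := by simp at hlen; omega
        obtain ⟨J, h1, h2, h3, h4, h5⟩ := ih t hlen' hch'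
        refine ⟨a :: J, ?_, ?_, rfl, ?_, ?_⟩
        · exact List.nodup_cons.mpr ⟨fun h => hat (h5 _ h), h1⟩
        · refine List.isChain_cons.mpr ⟨?_, h2⟩
          intro y hy
          rw [h3] at hy
          exact (List.isChain_cons.mp hch).1 y hy
        · cases t with
          | nil =>
            have : J = [] := by simpa using h3
            subst this; rfl
          | cons b u =>
            have hJ : J ≠ [] := by
              intro h; rw [h] at h3; simp at h3
            rw [glcons hJ, glcons (by simp : (b :: u : List α) ≠ [])]
            exact h4
        · intro k hk
          rcases List.mem_cons.mp hk with rfl | hk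
          · exact List.mem_cons_self
          · exact List.mem_cons_of_mem _ (h5 _ hk)

lemma chain'_mem {P : α → Prop} :
    ∀ (c : List α), c.Chain' r → (∀ x ∈ c, P x) →
      c.Chain' (fun a b => r a b ∧ P a ∧ P b)
  | [], _, _ => List.IsChain.nil
  | [a], _, _ => by simp [List.Chain']
  | a :: b :: t, h, hp => by
    simp only [List.Chain', List.isChain_cons_cons] at h ⊢
    exact ⟨⟨h.1, hp a (by simp), hp b (by simp)⟩,
      chain'_mem (b :: t) h.2 fun x hx => hp x (List.mem_cons_of_mem _ hx)⟩

lemma chain_all {a : α} {l : List α} (h : List.Chain r a l) (hr : ∀ x y, r x y → P y)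
    (ha : P a) : ∀ k ∈ a :: l, P k := by
  induction l generalizing a with
  | nil => simpa using ha
  | cons b u ih =>
    rcases List.chain_cons.mp h with ⟨hab, hbu⟩
    intro k hk
    rcases List.mem_cons.mp hk with rfl | hk
    · exact ha
    · exact ih hbu (hr a b hab) k hk

def pairSum (g : α → α → ℕ) : List α → ℕ
  | a :: b :: t => g a b + pairSum g (b :: t)
  | _ => 0

lemma pairSum_parity (g : α → α → ℕ) (f : α → ℕ) :
    ∀ (c : List α), (c.Chain' fun a b => (g a b + f a + f b) % 2 = 0) →
      ∀ h₁ h₂, c.head? = some h₁ → c.getLast? = some h₂ →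
      (pairSum g c + f h₁ + f h₂) % 2 = 0
  | [], _, h₁, h₂, e1, e2 => by simp at e1
  | [a], _, h₁, h₂, e1, e2 => by
    simp at e1 e2; subst e1; subst e2; simp [pairSum]; omega
  | a :: b :: t, hch, h₁, h₂, e1, e2 => by
    obtain ⟨hab, h'⟩ := List.isChain_cons_cons.mp hch
    have e2' : (b :: t).getLast? = some h₂ := by
      rw [← e2]; exact (glcons (by simp)).symm
    have ih := pairSum_parity g f (b :: t) h' b h₂ rfl e2'
    have e1' : a = h₁ := by simpa using e1
    subst e1'
    have hps : pairSum g (a :: b :: t) = g a b + pairSum g (b :: t) := rfl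
    omega

lemma pairSum_congr {g g' : α → α → ℕ} :
    ∀ (c : List α), (∀ x ∈ c, ∀ y ∈ c, g x y = g' x y) → pairSum g c = pairSum g' c
  | [], _ => rfl
  | [a], _ => rfl
  | a :: b :: t, h => by
    show g a b + _ = g' a b + _
    rw [h a (by simp) b (by simp),
      pairSum_congr (b :: t) fun x hx y hy =>
        h x (List.mem_cons_of_mem _ hx) y (List.mem_cons_of_mem _ hy)]

lemma pairSum_zero {g : α → α → ℕ} :
    ∀ (c : List α), (∀ x ∈ c, ∀ y ∈ c, g x y = 0) → pairSum g c = 0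
  | [], _ => rfl
  | [a], _ => rfl
  | a :: b :: t, h => by
    show g a b + _ = 0
    rw [h a (by simp) b (by simp),
      pairSum_zero (b :: t) fun x hx y hy =>
        h x (List.mem_cons_of_mem _ hx) y (List.mem_cons_of_mem _ hy)]

lemma pairSum_add {g g' : α → α → ℕ} :
    ∀ (c : List α), pairSum (fun a b => g a b + g' a b) c = pairSum g c + pairSum g' c
  | [] => rfl
  | [a] => rfl
  | a :: b :: t => by
    show g a b + g' a b + _ = g a b + _ + (g' a b + _)
    rw [pairSum_add (b :: t)]; omega

lemma chain_const (F : α → ℕ) :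
    ∀ (c : List α), c.Chain' r → (∀ x ∈ c, ∀ y ∈ c, r x y → F x = F y) →
      ∀ h₁ h₂, c.head? = some h₁ → c.getLast? = some h₂ → F h₁ = F h₂
  | [], _, _, h₁, h₂, e1, e2 => by simp at e1
  | [a], _, _, h₁, h₂, e1, e2 => by simp at e1 e2; subst e1; subst e2; rfl
  | a :: b :: t, hch, hF, h₁, h₂, e1, e2 => by
    obtain ⟨hab, h'⟩ := List.isChain_cons_cons.mp hch
    have e2' : (b :: t).getLast? = some h₂ := by
      rw [← e2]; exact (glcons (by simp)).symm
    have ih := chain_const F (b :: t) h'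
      (fun x hx y hy => hF x (List.mem_cons_of_mem _ hx) y (List.mem_cons_of_mem _ hy))
      b h₂ rfl e2'
    have e1' : a = h₁ := by simpa using e1
    subst e1'
    rw [hF a (by simp) b (by simp) hab, ih]

lemma tail_suffix_tail {p s : List α} (h : p <+: s) : p.tail <+: s.tail := by
  rcases h with ⟨q, rfl⟩
  cases p with
  | nil => exact List.nil_prefix
  | cons x u => exact ⟨q, rfl⟩

lemma extract (φ : ℤ × ℤ → ℤ) (P : ℤ × ℤ → Prop) {r : ℤ × ℤ → ℤ × ℤ → Prop} {a b : ℤ}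
    (c : List (ℤ × ℤ)) (hch : c.Chain' r) (hP : ∀ k ∈ c, P k)
    {h g : ℤ × ℤ} (hh : c.head? = some h) (hφh : φ h = a)
    (hg : c.getLast? = some g) (hφg : φ g = b) :
    ∃ J : List (ℤ × ℤ), J ≠ [] ∧ J.Nodup ∧ J.Chain' r ∧ (∀ k ∈ J, P k) ∧
      (∀ k ∈ J, (φ k = a ↔ J.head? = some k)) ∧
      (∀ k ∈ J, (φ k = b ↔ J.getLast? = some k)) := by
  -- step 1 : cut at last occurrence of φ = a
  have hmem_h : h ∈ c := by
    cases c with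
    | nil => simp at hh
    | cons x t => simp at hh; subst hh; exact List.mem_cons_self
  obtain ⟨s, hs1, hs2, hs3, ⟨e, he, hqe⟩, hs5⟩ :=
    cut_last (Q := fun k => φ k = a) c ⟨h, hmem_h, hφh⟩
  -- step 2 : cut at first occurrence of φ = b within s
  have hgs : g ∈ s := by
    have := hs2.trans hg  -- s.getLast? = some g
    exact List.mem_of_mem_getLast? this
  obtain ⟨p, hp1, hp2, hp3, ⟨e₂, he₂, hqe₂⟩, hp5⟩ :=
    cut_first (Q := fun k => φ k = b) s ⟨g, hgs, hφg⟩
  -- step 3 : remove duplicates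
  obtain ⟨J, hJ1, hJ2, hJ3, hJ4, hJ5⟩ :=
    toNodup p.length p (le_refl _) (hch.suffix hs3 |>.prefix hp3)
  have hJh : J.head? = some e := by rw [hJ3, hp2]; exact he
  have hJg : J.getLast? = some e₂ := by rw [hJ4]; exact he₂
  have hpsub : ∀ k ∈ p, k ∈ s := fun k hk => hp3.subset hk
  have hmem : ∀ k ∈ J, k ∈ c := fun k hk => hs3.subset (hpsub k (hJ5 k hk))
  have hpe : p.head? = some e := by rw [hp2]; exact he
  refine ⟨J, by rintro rfl; simp at hJh, hJ1, hJ2, fun k hk => hP k (hmem k hk), ?_, ?_⟩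
  · intro k hk
    constructor
    · intro hka
      have hkp : k ∈ p := hJ5 k hk
      have hke : k = e := by
        by_contra hne
        have hkt : k ∈ p.tail := by
          cases p with
          | nil => simp at hkp
          | cons x u =>
            simp at hpe; subst hpe
            rcases List.mem_cons.mp hkp with rfl | hku
            · exact absurd rfl hne
            · exact hku
        exact hs5 k ((tail_suffix_tail hp3).subset hkt) hka
      rw [hke]; exact hJh
    · intro hhd
      rw [hJh] at hhd
      have : e = k := by injection hhd
      rw [← this]; exact hqe
  · intro k hk
    constructor
    · intro hkb
      have hkp : k ∈ p := hJ5 k hk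
      have hpd := List.dropLast_append_getLast hp1
      have hke : k = e₂ := by
        rw [← hpd] at hkp
        rcases List.mem_append.mp hkp with hk1 | hk2
        · exact absurd hkb (hp5 k hk1)
        · have hlast : p.getLast hp1 = e₂ := by
            have := List.getLast?_eq_getLast hp1
            rw [this] at he₂; injection he₂
          simp at hk2; rw [hk2]; exact hlast
      rw [hke]; exact hJg
    · intro hhd
      rw [hJg] at hhd
      have : e₂ = k := by injection hhd
      rw [← this]; exact hqe₂

end PercDual

namespace PercDual

lemma neq_coords {a z : ℤ × ℤ} (h : a ≠ z) : a.1 ≠ z.1 ∨ a.2 ≠ z.2 := by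
  by_contra hc
  push_neg at hc
  exact h (Prod.ext hc.1 hc.2)

lemma plusAdj_coords {i j : ℤ × ℤ} (h : plusAdj i j) :
    (i.2 = j.2 ∧ (i.1 - j.1 = 1 ∨ j.1 - i.1 = 1)) ∨
    (i.1 = j.1 ∧ (i.2 - j.2 = 1 ∨ j.2 - i.2 = 1)) := by
  unfold plusAdj at h
  rcases abs_cases (i.1 - j.1) with ⟨e1, _⟩ | ⟨e1, _⟩ <;>
    rcases abs_cases (i.2 - j.2) with ⟨e2, _⟩ | ⟨e2, _⟩ <;>
      rw [e1, e2] at h <;> omega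

lemma starAdj_coords {i j : ℤ × ℤ} (h : starAdj i j) :
    i.1 - j.1 ≤ 1 ∧ j.1 - i.1 ≤ 1 ∧ i.2 - j.2 ≤ 1 ∧ j.2 - i.2 ≤ 1 := by
  unfold starAdj at h
  have h1 : |i.1 - j.1| ≤ 1 := h ▸ le_max_left _ _
  have h2 : |i.2 - j.2| ≤ 1 := h ▸ le_max_right _ _
  rw [abs_le] at h1 h2
  omega

lemma mk_starAdj_above (j : ℤ × ℤ) : starAdj (j.1, j.2 + 1) j := by
  show max |j.1 - j.1| |j.2 + 1 - j.2| = 1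
  rw [sub_self, abs_zero, (by ring : j.2 + 1 - j.2 = (1 : ℤ))]
  simp

lemma mk_starAdj_below {j : ℤ × ℤ} (h : j.2 = 1) : starAdj j (j.1, 0) := by
  show max |j.1 - j.1| |j.2 - 0| = 1
  rw [sub_self, abs_zero, sub_zero, h]
  simp

def indL (z a b : ℤ × ℤ) : ℕ :=
  if (a.2 = z.2 ∧ b.2 = z.2 - 1 ∧ a.1 < z.1) ∨ (b.2 = z.2 ∧ a.2 = z.2 - 1 ∧ b.1 < z.1)
  then 1 else 0

def indR (z a b : ℤ × ℤ) : ℕ :=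
  if (a.2 = z.2 ∧ b.2 = z.2 - 1 ∧ z.1 < a.1) ∨ (b.2 = z.2 ∧ a.2 = z.2 - 1 ∧ z.1 < b.1)
  then 1 else 0

def fW (z k : ℤ × ℤ) : ℕ := if k.2 = z.2 ∧ k.1 < z.1 then 1 else 0

def fU (z k : ℤ × ℤ) : ℕ := if z.2 ≤ k.2 then 1 else 0

lemma key0 {z z' a b : ℤ × ℤ} (h1 : z'.1 = z.1 + 1) (h2 : z'.2 = z.2)
    (haz : a ≠ z) (hbz : b ≠ z) : indL z' a b = indL z a b := by
  have h3 := neq_coords haz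
  have h4 := neq_coords hbz
  unfold indL
  split_ifs <;> omega

lemma key1 {z z' a b : ℤ × ℤ} (h1 : z'.1 = z.1) (h2 : z'.2 = z.2 + 1)
    (hx1 : a.1 - b.1 ≤ 1) (hx2 : b.1 - a.1 ≤ 1) (hy1 : a.2 - b.2 ≤ 1) (hy2 : b.2 - a.2 ≤ 1)
    (haz : a ≠ z) (hbz : b ≠ z) (haz' : a ≠ z') (hbz' : b ≠ z') :
    (indL z' a b + indL z a b + fW z a + fW z b) % 2 = 0 := by
  have h3 := neq_coords haz
  have h4 := neq_coords hbz
  have h5 := neq_coords haz'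
  have h6 := neq_coords hbz'
  unfold indL fW
  split_ifs <;> omega

lemma key2 {z a b : ℤ × ℤ} (hy1 : a.2 - b.2 ≤ 1) (hy2 : b.2 - a.2 ≤ 1)
    (haz : a ≠ z) (hbz : b ≠ z) :
    (indL z a b + indR z a b + fU z a + fU z b) % 2 = 0 := by
  have h3 := neq_coords haz
  have h4 := neq_coords hbz
  unfold indL indR fU
  split_ifs <;> omega

lemma not_both {m n : ℤ} {ω : ℤ × ℤ → Bool} (hm : 1 ≤ m) (hn : 1 ≤ n)
    (hA : ∃ J, IsLRCrossing plusAdj m n J ∧ ∀ k ∈ J, ω k = true)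
    (hB : ∃ J, IsTDCrossing starAdj m n J ∧ ∀ k ∈ J, ω k = false) : False := by
  obtain ⟨Pl, ⟨hP0, -, hPch, hPrect, hPhead, hPlast⟩, hPocc⟩ := hA
  obtain ⟨Ql, ⟨hQ0, -, hQch, hQrect, hQhead, hQlast⟩, hQvac⟩ := hB
  have hp1 : Pl.head? = some (Pl.head hP0) := List.head?_eq_head hP0
  set p1 := Pl.head hP0 with hp1d
  have hp1m : p1 ∈ Pl := List.head_mem hP0
  have hp1x : p1.1 = 1 := (hPhead p1 hp1m).mpr hp1
  have hpt : Pl.getLast? = some (Pl.getLast hP0) := List.getLast?_eq_getLast hP0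
  set pt := Pl.getLast hP0 with hptd
  have hptm : pt ∈ Pl := List.getLast_mem hP0
  have hptx : pt.1 = m := (hPlast pt hptm).mpr hpt
  have hq1 : Ql.head? = some (Ql.head hQ0) := List.head?_eq_head hQ0
  set q1 := Ql.head hQ0 with hq1d
  have hq1m : q1 ∈ Ql := List.head_mem hQ0
  have hq1y : q1.2 = n := (hQhead q1 hq1m).mpr hq1
  have hqs : Ql.getLast? = some (Ql.getLast hQ0) := List.getLast?_eq_getLast hQ0
  set qs := Ql.getLast hQ0 with hqsd
  have hqsm : qs ∈ Ql := List.getLast_mem hQ0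
  have hqsy : qs.2 = 1 := (hQlast qs hqsm).mpr hqs
  set top : ℤ × ℤ := (q1.1, n + 1) with htopd
  set bot : ℤ × ℤ := (qs.1, 0) with hbotd
  have htop2 : top.2 = n + 1 := rfl
  have htop1 : top.1 = q1.1 := rfl
  have hbot2 : bot.2 = 0 := rfl
  have hbot1 : bot.1 = qs.1 := rfl
  set Qe : List (ℤ × ℤ) := top :: (Ql ++ [bot]) with hQed
  have hQe_head : Qe.head? = some top := rfl
  have hQe_last : Qe.getLast? = some bot := by
    rw [hQed, glcons (by simp), List.getLast?_append]
    rfl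
  have hQe_chain : Qe.Chain' starAdj := by
    rw [hQed]
    refine List.isChain_cons.mpr ⟨?_, ?_⟩
    · intro y hy
      have hh : (Ql ++ [bot]).head? = some q1 := by
        cases Ql with
        | nil => simp at hQ0
        | cons x u => simp at hq1; rw [List.cons_append, List.head?_cons, hq1]
      rw [hh] at hy
      simp at hy
      subst hy
      have : top = (q1.1, q1.2 + 1) := by rw [htopd, hq1y]
      rw [this]
      exact mk_starAdj_above q1
    · refine List.isChain_append.mpr ⟨hQch, by simp, ?_⟩
      intro x hx y hy
      rw [hqs] at hx
      simp at hx hy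
      subst hx; subst hy
      exact mk_starAdj_below hqsy
  have hQeX : ∀ k ∈ Qe, 1 ≤ k.1 ∧ k.1 ≤ m := by
    intro k hk
    rw [hQed] at hk
    rcases List.mem_cons.mp hk with rfl | hk
    · have := hQrect q1 hq1m
      exact ⟨this.1, this.2.1⟩
    · rcases List.mem_append.mp hk with hk | hk
      · have := hQrect k hk
        exact ⟨this.1, this.2.1⟩
      · simp at hk; subst hk
        have := hQrect qs hqsm
        exact ⟨this.1, this.2.1⟩
  have hQeNe : ∀ k ∈ Qe, ∀ z ∈ Pl, k ≠ z := by
    intro k hk z hz heq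
    have hzrect := hPrect z hz
    rw [hQed] at hk
    rcases List.mem_cons.mp hk with rfl | hk
    · rw [show z = top from heq.symm] at hzrect
      have := hzrect.2.2.2
      rw [htop2] at this
      omega
    · rcases List.mem_append.mp hk with hk | hk
      · have h1 : ω k = false := hQvac k hk
        have h2 : ω k = true := heq ▸ hPocc z hz
        rw [h1] at h2
        exact Bool.false_ne_true h2
      · simp at hk; subst hk
        rw [show z = bot from heq.symm] at hzrect
        have := hzrect.2.2.1
        rw [hbot2] at this
        omega
  have hQeSC : Qe.Chain' (fun a b => starAdj a b ∧ a ∈ Qe ∧ b ∈ Qe) :=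
    chain'_mem Qe hQe_chain (fun x hx => hx)
  set cnt : (ℤ × ℤ) → ℕ := fun z => pairSum (fun a b => indL z a b) Qe with hcnt
  -- vertical transfer
  have keyV : ∀ z z' : ℤ × ℤ, z'.1 = z.1 → z'.2 = z.2 + 1 →
      (∀ k ∈ Qe, k ≠ z) → (∀ k ∈ Qe, k ≠ z') → 1 ≤ z.2 → z.2 ≤ n →
      cnt z % 2 = cnt z' % 2 := by
    intro z z' h1 h2 hz hz' hzlo hzhi
    have hchain : Qe.Chain' (fun a b =>
        ((fun a b => indL z' a b + indL z a b) a b + fW z a + fW z b) % 2 = 0) := by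
      refine hQeSC.imp ?_
      rintro a b ⟨hstar, ha, hb⟩
      have hc := starAdj_coords hstar
      exact key1 h1 h2 hc.1 hc.2.1 hc.2.2.1 hc.2.2.2 (hz a ha) (hz b hb) (hz' a ha) (hz' b hb)
    have hpar := pairSum_parity _ (fW z) Qe hchain top bot hQe_head hQe_last
    rw [pairSum_add] at hpar
    have hWt : fW z top = 0 := by
      unfold fW
      rw [if_neg]
      rintro ⟨h, -⟩
      rw [htop2] at h
      omega
    have hWb : fW z bot = 0 := by
      unfold fW
      rw [if_neg]
      rintro ⟨h, -⟩
      rw [hbot2] at h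
      omega
    rw [hWt, hWb] at hpar
    have hl1 : cnt z = pairSum (fun a b => indL z a b) Qe := rfl
    have hl2 : cnt z' = pairSum (fun a b => indL z' a b) Qe := rfl
    have hl3 : pairSum (fun a b => indL z a b) Qe = pairSum (indL z) Qe := rfl
    have hl4 : pairSum (fun a b => indL z' a b) Qe = pairSum (indL z') Qe := rfl
    omega
  -- constancy of parity along the occupied path
  have hstep : ∀ x ∈ Pl, ∀ y ∈ Pl, plusAdj x y → cnt x % 2 = cnt y % 2 := by
    intro x hx y hy hadj
    have hxz : ∀ k ∈ Qe, k ≠ x := fun k hk => hQeNe k hk x hx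
    have hyz : ∀ k ∈ Qe, k ≠ y := fun k hk => hQeNe k hk y hy
    have hxr := hPrect x hx
    have hyr := hPrect y hy
    rcases plusAdj_coords hadj with ⟨he, hd⟩ | ⟨he, hd⟩
    · have : cnt x = cnt y := by
        rcases hd with hd | hd
        · exact pairSum_congr Qe fun p hp q hq =>
            key0 (z := y) (z' := x) (by omega) he (hyz p hp) (hyz q hq)
        · exact (pairSum_congr Qe fun p hp q hq =>
            key0 (z := x) (z' := y) (by omega) he.symm (hxz p hp) (hxz q hq)).symm
      rw [this]
    · rcases hd with hd | hd
      · exact (keyV y x he (by omega) hyz hxz hyr.2.2.1 hyr.2.2.2).symm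
      · exact keyV x y he.symm (by omega) hxz hyz hxr.2.2.1 hxr.2.2.2
  -- parity at the two ends
  have hB0 : cnt p1 % 2 = 0 := by
    have : cnt p1 = 0 := by
      refine pairSum_zero Qe ?_
      intro p hp q hq
      unfold indL
      rw [if_neg]
      have h1 := (hQeX p hp).1
      have h2 := (hQeX q hq).1
      rintro (⟨-, -, hlt⟩ | ⟨-, -, hlt⟩) <;> omega
    rw [this]
  have hC1 : cnt pt % 2 = 1 := by
    obtain ⟨-, -, hpt3, hpt4⟩ := hPrect pt hptm
    have hchain : Qe.Chain' (fun a b =>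
        ((fun a b => indL pt a b + indR pt a b) a b + fU pt a + fU pt b) % 2 = 0) := by
      refine hQeSC.imp ?_
      rintro a b ⟨hstar, ha, hb⟩
      have hc := starAdj_coords hstar
      exact key2 hc.2.2.1 hc.2.2.2 (hQeNe a ha pt hptm) (hQeNe b hb pt hptm)
    have hpar := pairSum_parity _ (fU pt) Qe hchain top bot hQe_head hQe_last
    rw [pairSum_add] at hpar
    have hR : pairSum (fun a b => indR pt a b) Qe = 0 := by
      refine pairSum_zero Qe ?_
      intro p hp q hq
      unfold indR
      rw [if_neg]
      have h1 := (hQeX p hp).2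
      have h2 := (hQeX q hq).2
      rintro (⟨-, -, hlt⟩ | ⟨-, -, hlt⟩) <;> omega
    have hUt : fU pt top = 1 := by
      unfold fU
      rw [if_pos (show pt.2 ≤ top.2 by rw [htop2]; omega)]
    have hUb : fU pt bot = 0 := by
      unfold fU
      rw [if_neg (show ¬(pt.2 ≤ bot.2) by rw [hbot2]; omega)]
    have hl1 : cnt pt = pairSum (fun a b => indL pt a b) Qe := rfl
    have hl2 : pairSum (fun a b => indL pt a b) Qe = pairSum (indL pt) Qe := rfl
    have hl3 : pairSum (fun a b => indR pt a b) Qe = pairSum (indR pt) Qe := rfl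
    omega
  have h0 := chain_const (fun z => cnt z % 2) Pl hPch hstep p1 pt hp1 hpt
  have h2 : cnt p1 % 2 = cnt pt % 2 := h0
  omega

end PercDual

namespace PercDual

lemma prod_eq {p q : ℤ × ℤ} (h1 : p.1 = q.1) (h2 : p.2 = q.2) : p = q := Prod.ext h1 h2

lemma prod_eq' {α β : Type*} {p q : α × β} (h1 : p.1 = q.1) (h2 : p.2 = q.2) : p = q :=
  Prod.ext h1 h2

lemma mk_plusAdj {p q : ℤ × ℤ} (h1 : -1 ≤ p.1 - q.1) (h2 : p.1 - q.1 ≤ 1)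
    (h3 : -1 ≤ p.2 - q.2) (h4 : p.2 - q.2 ≤ 1)
    (h5 : p.1 = q.1 ∨ p.2 = q.2) (h6 : ¬(p.1 = q.1 ∧ p.2 = q.2)) : plusAdj p q := by
  unfold plusAdj
  rw [Int.abs_eq_natAbs, Int.abs_eq_natAbs]
  omega

lemma mk_starAdj {p q : ℤ × ℤ} (h1 : -1 ≤ p.1 - q.1) (h2 : p.1 - q.1 ≤ 1)
    (h3 : -1 ≤ p.2 - q.2) (h4 : p.2 - q.2 ≤ 1)
    (h6 : ¬(p.1 = q.1 ∧ p.2 = q.2)) : starAdj p q := by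
  unfold starAdj
  rw [Int.abs_eq_natAbs, Int.abs_eq_natAbs, max_def]
  split_ifs <;> omega

inductive Dir : Type
  | R | U | L | D
  deriving DecidableEq

def vec : Dir → ℤ × ℤ
  | .R => (1, 0)
  | .U => (0, 1)
  | .L => (-1, 0)
  | .D => (0, -1)

def rotL : Dir → Dir
  | .R => .U
  | .U => .L
  | .L => .D
  | .D => .R

def rotR : Dir → Dir
  | .R => .D
  | .U => .R
  | .L => .U
  | .D => .L

def lOff : Dir → ℤ × ℤ
  | .R => (1, 1)
  | .U => (0, 1)
  | .L => (0, 0)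
  | .D => (1, 0)

def rOff : Dir → ℤ × ℤ
  | .R => (1, 0)
  | .U => (1, 1)
  | .L => (0, 1)
  | .D => (0, 0)

def cS : Dir → ℤ × ℤ
  | .R => (0, 0)
  | .U => (1, 0)
  | .L => (1, 1)
  | .D => (0, 1)

def cT : Dir → ℤ × ℤ
  | .R => (0, 1)
  | .U => (0, 0)
  | .L => (1, 0)
  | .D => (1, 1)

def dirZ : Dir → ℤ
  | .R => 0
  | .U => 1
  | .L => 2
  | .D => 3

lemma dirZ_inj : ∀ {d d' : Dir}, dirZ d = dirZ d' → d = d' := by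
  intro d d' h
  cases d <;> cases d' <;> first | rfl | (exfalso; simp [dirZ] at h)

lemma dirZ_bound (d : Dir) : 0 ≤ dirZ d ∧ dirZ d ≤ 3 := by
  cases d <;> simp [dirZ]

abbrev St := (ℤ × ℤ) × Dir

def Lsq (s : St) : ℤ × ℤ := s.1 + lOff s.2
def Rsq (s : St) : ℤ × ℤ := s.1 + rOff s.2

lemma id1 : ∀ d, lOff (rotR d) = rOff d := by intro d; cases d <;> rfl
lemma id2 : ∀ d, vec d + rOff (rotR d) = rOff d := by intro d; cases d <;> decide
lemma id3 : ∀ d, vec d + lOff (rotL d) = lOff d := by intro d; cases d <;> decide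
lemma id4 : ∀ d, rOff (rotL d) = lOff d := by intro d; cases d <;> rfl
lemma id_cs1 : ∀ d, vec d + cS d = rOff d := by intro d; cases d <;> decide
lemma id_ct1 : ∀ d, vec d + cT d = lOff d := by intro d; cases d <;> decide
lemma id_cs2 : ∀ d, vec d + cS (rotR d) = lOff d := by intro d; cases d <;> decide
lemma id_cs3 : ∀ d, rOff d = cS (rotL d) := by intro d; cases d <;> rfl
lemma id_ct2 : ∀ d, vec d + cT (rotL d) = rOff d := by intro d; cases d <;> decide
lemma id_rot5 : ∀ d, rotL (rotR d) = d := by intro d; cases d <;> rfl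
lemma id_rot6 : ∀ d, rotR (rotL d) = d := by intro d; cases d <;> rfl

lemma lr_plus (s : St) : plusAdj (Lsq s) (Rsq s) := by
  rcases s with ⟨v, d⟩
  apply mk_plusAdj <;>
    cases d <;>
      simp [Lsq, Rsq, lOff, rOff, Prod.fst_add, Prod.snd_add] <;> omega

lemma corner_bound (s : St) :
    s.1.1 ≤ (Rsq s).1 ∧ (Rsq s).1 ≤ s.1.1 + 1 ∧ s.1.2 ≤ (Rsq s).2 ∧ (Rsq s).2 ≤ s.1.2 + 1 := by
  rcases s with ⟨v, d⟩
  cases d <;> refine ⟨?_, ?_, ?_, ?_⟩ <;>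
    simp [Rsq, rOff, Prod.fst_add, Prod.snd_add] <;> omega

lemma corner_bound_L (s : St) : (Lsq s).2 ≤ s.1.2 + 1 := by
  rcases s with ⟨v, d⟩
  cases d <;> simp [Lsq, lOff, Prod.snd_add] <;> omega

def occS (m n : ℤ) (ω : ℤ × ℤ → Bool) (k : ℤ × ℤ) : Bool :=
  if k.1 ≤ 0 ∧ k.2 ≤ n then true
  else if 1 ≤ k.1 ∧ k.1 ≤ m ∧ 1 ≤ k.2 ∧ k.2 ≤ n then ω k
  else false

section B
variable {m n : ℤ} {ω : ℤ × ℤ → Bool}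

lemma occS_quad {k : ℤ × ℤ} (h1 : k.1 ≤ 0) (h2 : k.2 ≤ n) : occS m n ω k = true := by
  unfold occS
  rw [if_pos ⟨h1, h2⟩]

lemma occ_cases {k : ℤ × ℤ} (h : occS m n ω k = true) :
    (k.1 ≤ 0 ∧ k.2 ≤ n) ∨ (1 ≤ k.1 ∧ k.1 ≤ m ∧ 1 ≤ k.2 ∧ k.2 ≤ n) := by
  unfold occS at h
  by_cases h1 : k.1 ≤ 0 ∧ k.2 ≤ n
  · exact Or.inl h1
  · rw [if_neg h1] at h
    by_cases h2 : 1 ≤ k.1 ∧ k.1 ≤ m ∧ 1 ≤ k.2 ∧ k.2 ≤ n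
    · exact Or.inr h2
    · rw [if_neg h2] at h
      exact absurd h (by simp)

lemma not_quad_of_false {k : ℤ × ℤ} (h : occS m n ω k = false) :
    ¬(k.1 ≤ 0 ∧ k.2 ≤ n) := by
  intro hq
  rw [occS_quad hq.1 hq.2] at h
  exact absurd h (by simp)

lemma occS_rect_true {k : ℤ × ℤ} (h : occS m n ω k = true) (hx : 1 ≤ k.1) :
    inRect m n k ∧ ω k = true := by
  unfold occS at h
  by_cases h1 : k.1 ≤ 0 ∧ k.2 ≤ n
  · exfalso; omega
  · rw [if_neg h1] at h
    by_cases h2 : 1 ≤ k.1 ∧ k.1 ≤ m ∧ 1 ≤ k.2 ∧ k.2 ≤ n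
    · rw [if_pos h2] at h
      exact ⟨⟨h2.1, h2.2.1, h2.2.2.1, h2.2.2.2⟩, h⟩
    · rw [if_neg h2] at h
      exact absurd h (by simp)

lemma occS_rect_false {k : ℤ × ℤ} (h : occS m n ω k = false) (hr : inRect m n k) :
    ω k = false := by
  obtain ⟨r1, r2, r3, r4⟩ := hr
  unfold occS at h
  rw [if_neg (by omega : ¬(k.1 ≤ 0 ∧ k.2 ≤ n)), if_pos ⟨r1, r2, r3, r4⟩] at h
  exact h

lemma occS_top (x : ℤ) : occS m n ω (x, n + 1) = false := by
  unfold occS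
  rw [if_neg (show ¬(x ≤ 0 ∧ n + 1 ≤ n) by omega),
    if_neg (show ¬(1 ≤ x ∧ x ≤ m ∧ 1 ≤ n + 1 ∧ n + 1 ≤ n) by omega)]

end B

def wstep (m n : ℤ) (ω : ℤ × ℤ → Bool) (s : St) : St :=
  if occS m n ω (s.1 + vec s.2 + rOff s.2) = false then (s.1 + vec s.2, rotR s.2)
  else if occS m n ω (s.1 + vec s.2 + lOff s.2) = true then (s.1 + vec s.2, rotL s.2)
  else (s.1 + vec s.2, s.2)

def rOcc (m n : ℤ) (ω : ℤ × ℤ → Bool) (k : ℤ × ℤ) : Prop :=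
  Relation.ReflTransGen
    (fun a b => occS m n ω a = true ∧ occS m n ω b = true ∧ plusAdj a b) ((0 : ℤ), n) k

def Good (m n : ℤ) (k : ℤ × ℤ) : Prop := n + 1 ≤ k.2 ∨ k.2 ≤ 0 ∨ (1 ≤ k.1 ∧ k.1 ≤ m)

def rVac (m n : ℤ) (ω : ℤ × ℤ → Bool) (k : ℤ × ℤ) : Prop :=
  Relation.ReflTransGen
    (fun a b => occS m n ω a = false ∧ occS m n ω b = false ∧ starAdj a b ∧
      Good m n a ∧ Good m n b) ((0 : ℤ), n + 1) k

def WInv (m n : ℤ) (ω : ℤ × ℤ → Bool) (s : St) : Prop :=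
  occS m n ω (Lsq s) = false ∧ occS m n ω (Rsq s) = true ∧
    rOcc m n ω (Rsq s) ∧ rVac m n ω (Lsq s)

section C
variable {m n : ℤ} {ω : ℤ × ℤ → Bool}

lemma rVac_vac {k : ℤ × ℤ} (h : rVac m n ω k) : occS m n ω k = false := by
  rcases h.cases_tail with rfl | ⟨c, -, hr⟩
  · exact occS_top 0
  · exact hr.2.1

lemma rVac_good {k : ℤ × ℤ} (h : rVac m n ω k) : Good m n k := by
  rcases h.cases_tail with rfl | ⟨c, -, hr⟩
  · left; rfl
  · exact hr.2.2.2.2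

lemma good_of (hm : 1 ≤ m) (Hm : ¬ ∃ k, rOcc m n ω k ∧ k.1 = m) {l r : ℤ × ℤ}
    (hl : occS m n ω l = false) (hr : occS m n ω r = true) (hro : rOcc m n ω r)
    (hadj : plusAdj l r) : Good m n l := by
  unfold Good
  by_cases hy : n + 1 ≤ l.2 ∨ l.2 ≤ 0
  · tauto
  · push_neg at hy
    have hnq := not_quad_of_false hl
    have h1 : 1 ≤ l.1 := by omega
    refine Or.inr (Or.inr ⟨h1, ?_⟩)
    have hc := plusAdj_coords hadj
    have hrm : r.1 ≠ m := fun he => Hm ⟨r, hro, he⟩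
    rcases occ_cases hr with ⟨ha, hb⟩ | ⟨ha, hb, -, -⟩ <;> omega

end C

lemma wstep_spec (m n : ℤ) (ω : ℤ × ℤ → Bool) (s : St) :
    (occS m n ω (s.1 + vec s.2 + rOff s.2) = false ∧
      wstep m n ω s = (s.1 + vec s.2, rotR s.2)) ∨
    (occS m n ω (s.1 + vec s.2 + rOff s.2) = true ∧
      occS m n ω (s.1 + vec s.2 + lOff s.2) = true ∧
      wstep m n ω s = (s.1 + vec s.2, rotL s.2)) ∨
    (occS m n ω (s.1 + vec s.2 + rOff s.2) = true ∧
      occS m n ω (s.1 + vec s.2 + lOff s.2) = false ∧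
      wstep m n ω s = (s.1 + vec s.2, s.2)) := by
  unfold wstep
  split_ifs with hB hA
  · exact Or.inl ⟨hB, rfl⟩
  · exact Or.inr (Or.inl ⟨by revert hB; cases occS m n ω (s.1 + vec s.2 + rOff s.2) <;> simp,
      hA, rfl⟩)
  · exact Or.inr (Or.inr ⟨by revert hB; cases occS m n ω (s.1 + vec s.2 + rOff s.2) <;> simp,
      by revert hA; cases occS m n ω (s.1 + vec s.2 + lOff s.2) <;> simp, rfl⟩)

section D
variable {m n : ℤ} {ω : ℤ × ℤ → Bool}

lemma winv_step (hm : 1 ≤ m) (Hm : ¬ ∃ k, rOcc m n ω k ∧ k.1 = m) {s : St}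
    (h : WInv m n ω s) : WInv m n ω (wstep m n ω s) := by
  obtain ⟨hL, hR, hRO, hLV⟩ := h
  rcases wstep_spec m n ω s with ⟨hB, he⟩ | ⟨hB, hA, he⟩ | ⟨hB, hA, he⟩
  · -- turn right : newL = B, newR = oldR
    rw [he]
    have eL : Lsq (s.1 + vec s.2, rotR s.2) = s.1 + vec s.2 + rOff s.2 := by
      show s.1 + vec s.2 + lOff (rotR s.2) = _
      rw [id1]
    have eR : Rsq (s.1 + vec s.2, rotR s.2) = Rsq s := by
      show s.1 + vec s.2 + rOff (rotR s.2) = s.1 + rOff s.2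
      rw [add_assoc, id2]
    have hstar : starAdj (Lsq s) (s.1 + vec s.2 + rOff s.2) := by
      apply mk_starAdj <;>
        · rcases s with ⟨v, d⟩
          cases d <;>
            simp [Lsq, lOff, rOff, vec, Prod.fst_add, Prod.snd_add] <;> omega
    have hgood : Good m n (s.1 + vec s.2 + rOff s.2) := by
      have hpl := lr_plus (s.1 + vec s.2, rotR s.2)
      rw [eL, eR] at hpl
      exact good_of hm Hm hB hR hRO hpl
    refine ⟨?_, ?_, ?_, ?_⟩
    · rw [eL]; exact hB
    · rw [eR]; exact hR
    · rw [eR]; exact hRO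
    · rw [eL]; exact hLV.tail ⟨rVac_vac hLV, hB, hstar, rVac_good hLV, hgood⟩
  · -- turn left : newL = oldL, newR = A
    rw [he]
    have eL : Lsq (s.1 + vec s.2, rotL s.2) = Lsq s := by
      show s.1 + vec s.2 + lOff (rotL s.2) = s.1 + lOff s.2
      rw [add_assoc, id3]
    have eR : Rsq (s.1 + vec s.2, rotL s.2) = s.1 + vec s.2 + lOff s.2 := by
      show s.1 + vec s.2 + rOff (rotL s.2) = _
      rw [id4]
    have hadj1 : plusAdj (Rsq s) (s.1 + vec s.2 + rOff s.2) := by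
      apply mk_plusAdj <;>
        · rcases s with ⟨v, d⟩
          cases d <;>
            simp [Rsq, lOff, rOff, vec, Prod.fst_add, Prod.snd_add] <;> omega
    have hadj2 : plusAdj (s.1 + vec s.2 + rOff s.2) (s.1 + vec s.2 + lOff s.2) := by
      apply mk_plusAdj <;>
        · rcases s with ⟨v, d⟩
          cases d <;>
            simp [lOff, rOff, vec, Prod.fst_add, Prod.snd_add] <;> omega
    refine ⟨?_, ?_, ?_, ?_⟩
    · rw [eL]; exact hL
    · rw [eR]; exact hA
    · rw [eR]; exact (hRO.tail ⟨hR, hB, hadj1⟩).tail ⟨hB, hA, hadj2⟩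
    · rw [eL]; exact hLV
  · -- straight : newL = A, newR = B
    rw [he]
    have eL : Lsq (s.1 + vec s.2, s.2) = s.1 + vec s.2 + lOff s.2 := rfl
    have eR : Rsq (s.1 + vec s.2, s.2) = s.1 + vec s.2 + rOff s.2 := rfl
    have hadj1 : plusAdj (Rsq s) (s.1 + vec s.2 + rOff s.2) := by
      apply mk_plusAdj <;>
        · rcases s with ⟨v, d⟩
          cases d <;>
            simp [Rsq, lOff, rOff, vec, Prod.fst_add, Prod.snd_add] <;> omega
    have hstar : starAdj (Lsq s) (s.1 + vec s.2 + lOff s.2) := by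
      apply mk_starAdj <;>
        · rcases s with ⟨v, d⟩
          cases d <;>
            simp [Lsq, lOff, vec, Prod.fst_add, Prod.snd_add] <;> omega
    have hgood : Good m n (s.1 + vec s.2 + lOff s.2) := by
      have hpl := lr_plus (s.1 + vec s.2, s.2)
      rw [eL, eR] at hpl
      exact good_of hm Hm hA hB (hRO.tail ⟨hR, hB, hadj1⟩) hpl
    refine ⟨?_, ?_, ?_, ?_⟩
    · rw [eL]; exact hA
    · rw [eR]; exact hB
    · rw [eR]; exact hRO.tail ⟨hR, hB, hadj1⟩
    · rw [eL]; exact hLV.tail ⟨rVac_vac hLV, hA, hstar, rVac_good hLV, hgood⟩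

end D

end PercDual

namespace PercDual

def s0 (n : ℤ) : St := (((-1 : ℤ), n), Dir.R)

def walk (m n : ℤ) (ω : ℤ × ℤ → Bool) (N : ℕ) : St := (wstep m n ω)^[N] (s0 n)

section E
variable {m n : ℤ} {ω : ℤ × ℤ → Bool}

lemma walk_zero : walk m n ω 0 = s0 n := rfl

lemma walk_succ (N : ℕ) : walk m n ω (N + 1) = wstep m n ω (walk m n ω N) :=
  Function.iterate_succ_apply' _ _ _

lemma s0_L : Lsq (s0 n) = ((0 : ℤ), n + 1) := by
  apply prod_eq
  · show (-1 : ℤ) + 1 = 0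
    norm_num
  · show n + 1 = n + 1
    rfl

lemma s0_R : Rsq (s0 n) = ((0 : ℤ), n) := by
  apply prod_eq
  · show (-1 : ℤ) + 1 = 0
    norm_num
  · show n + 0 = n
    exact add_zero n

lemma winv_s0 : WInv m n ω (s0 n) := by
  refine ⟨?_, ?_, ?_, ?_⟩
  · rw [s0_L]; exact occS_top 0
  · rw [s0_R]; exact occS_quad (le_refl 0) (le_refl n)
  · rw [s0_R]; exact Relation.ReflTransGen.refl
  · rw [s0_L]; exact Relation.ReflTransGen.refl

lemma walk_inv (hm : 1 ≤ m) (Hm : ¬ ∃ k, rOcc m n ω k ∧ k.1 = m) :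
    ∀ N, WInv m n ω (walk m n ω N) := by
  intro N
  induction N with
  | zero => exact winv_s0
  | succ N ih => rw [walk_succ]; exact winv_step hm Hm ih

lemma ray_char {s : St} (h1 : occS m n ω (Lsq s) = false) (h2 : occS m n ω (Rsq s) = true)
    (hx : s.1.1 ≤ -2) : s.1.2 = n ∧ s.2 = Dir.R := by
  rcases s with ⟨⟨x, y⟩, d⟩
  have hx' : x ≤ -2 := hx
  cases d
  case R =>
    have hq : ¬(x + 1 ≤ 0 ∧ y + 1 ≤ n) := not_quad_of_false h1
    have hc : (x + 1 ≤ 0 ∧ y + 0 ≤ n) ∨ (1 ≤ x + 1 ∧ x + 1 ≤ m ∧ 1 ≤ y + 0 ∧ y + 0 ≤ n) :=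
      occ_cases h2
    exact ⟨show y = n by omega, rfl⟩
  case U =>
    have hq : ¬(x + 0 ≤ 0 ∧ y + 1 ≤ n) := not_quad_of_false h1
    have hc : (x + 1 ≤ 0 ∧ y + 1 ≤ n) ∨ (1 ≤ x + 1 ∧ x + 1 ≤ m ∧ 1 ≤ y + 1 ∧ y + 1 ≤ n) :=
      occ_cases h2
    exfalso
    omega
  case L =>
    have hq : ¬(x + 0 ≤ 0 ∧ y + 0 ≤ n) := not_quad_of_false h1
    have hc : (x + 0 ≤ 0 ∧ y + 1 ≤ n) ∨ (1 ≤ x + 0 ∧ x + 0 ≤ m ∧ 1 ≤ y + 1 ∧ y + 1 ≤ n) :=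
      occ_cases h2
    exfalso
    omega
  case D =>
    have hq : ¬(x + 1 ≤ 0 ∧ y + 0 ≤ n) := not_quad_of_false h1
    have hc : (x + 0 ≤ 0 ∧ y + 0 ≤ n) ∨ (1 ≤ x + 0 ∧ x + 0 ≤ m ∧ 1 ≤ y + 0 ∧ y + 0 ≤ n) :=
      occ_cases h2
    exfalso
    omega

lemma wstep_char {s : St} (hL : occS m n ω (Lsq s) = false) (hR : occS m n ω (Rsq s) = true)
    {u : ℤ × ℤ} {d' : Dir} (h : wstep m n ω s = (u, d')) :
    (s = (u - vec d', d') ∧ occS m n ω (u + cS d') = true ∧ occS m n ω (u + cT d') = false) ∨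
    (s = (u - vec (rotL d'), rotL d') ∧ occS m n ω (u + cS d') = false) ∨
    (s = (u - vec (rotR d'), rotR d') ∧ occS m n ω (u + cS d') = true ∧
      occS m n ω (u + cT d') = true) := by
  rcases wstep_spec m n ω s with ⟨hB, he⟩ | ⟨hB, hA, he⟩ | ⟨hB, hA, he⟩ <;> rw [he] at h <;>
    [skip; skip; skip]
  · -- turn right branch : d' = rotR s.2
    have h1 : s.1 + vec s.2 = u := congrArg Prod.fst h
    have h2 : rotR s.2 = d' := congrArg Prod.snd h
    refine Or.inr (Or.inl ⟨?_, ?_⟩)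
    · rw [← h2, id_rot5, ← h1, add_sub_cancel_right]
    · rw [← h2, ← h1, add_assoc, id_cs2]
      exact hL
  · -- turn left branch : d' = rotL s.2
    have h1 : s.1 + vec s.2 = u := congrArg Prod.fst h
    have h2 : rotL s.2 = d' := congrArg Prod.snd h
    refine Or.inr (Or.inr ⟨?_, ?_, ?_⟩)
    · rw [← h2, id_rot6, ← h1, add_sub_cancel_right]
    · rw [← h2, ← id_cs3, ← h1]
      exact hB
    · rw [← h2, ← h1, add_assoc, id_ct2]
      exact hR
  · -- straight branch : d' = s.2
    have h1 : s.1 + vec s.2 = u := congrArg Prod.fst h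
    have h2 : s.2 = d' := congrArg Prod.snd h
    refine Or.inl ⟨?_, ?_, ?_⟩
    · rw [← h2, ← h1, add_sub_cancel_right]
    · rw [← h2, ← h1, add_assoc, id_cs1]
      exact hR
    · rw [← h2, ← h1, add_assoc, id_ct1]
      exact hL

lemma wstep_inj {s1 s2 : St}
    (h1L : occS m n ω (Lsq s1) = false) (h1R : occS m n ω (Rsq s1) = true)
    (h2L : occS m n ω (Lsq s2) = false) (h2R : occS m n ω (Rsq s2) = true)
    (he : wstep m n ω s1 = wstep m n ω s2) : s1 = s2 := by
  rcases ht : wstep m n ω s2 with ⟨u, d'⟩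
  rw [ht] at he
  rcases wstep_char h1L h1R he with ⟨e1, f1, f2⟩ | ⟨e1, f1⟩ | ⟨e1, f1, f2⟩ <;>
    rcases wstep_char h2L h2R ht with ⟨e2, g1, g2⟩ | ⟨e2, g1⟩ | ⟨e2, g1, g2⟩
  · rw [e1, e2]
  · exfalso; rw [f1] at g1; exact absurd g1 (by simp)
  · exfalso; rw [f2] at g2; exact absurd g2 (by simp)
  · exfalso; rw [g1] at f1; exact absurd f1 (by simp)
  · rw [e1, e2]
  · exfalso; rw [f1] at g1; exact absurd g1 (by simp)
  · exfalso; rw [g2] at f2; exact absurd f2 (by simp)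
  · exfalso; rw [g1] at f1; exact absurd f1 (by simp)
  · rw [e1, e2]

lemma pred_ray {s : St} (hL : occS m n ω (Lsq s) = false) (hR : occS m n ω (Rsq s) = true)
    {x : ℤ} (hx : x ≤ -1) (h : wstep m n ω s = ((x, n), Dir.R)) :
    s = ((x - 1, n), Dir.R) := by
  rcases wstep_char hL hR h with ⟨e1, -, -⟩ | ⟨e1, f1⟩ | ⟨e1, -, f2⟩
  · rw [e1]
    refine congrArg (fun w => (w, Dir.R)) ?_
    apply prod_eq
    · show x - 1 = x - 1
      rfl
    · show n - 0 = n
      exact sub_zero n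
  · exfalso
    have : occS m n ω ((x, n) + cS Dir.R) = true :=
      occS_quad (show x + 0 ≤ 0 by omega) (show n + 0 ≤ n by omega)
    rw [this] at f1
    exact absurd f1 (by simp)
  · exfalso
    have hc : (x + 0 ≤ 0 ∧ n + 1 ≤ n) ∨ (1 ≤ x + 0 ∧ x + 0 ≤ m ∧ 1 ≤ n + 1 ∧ n + 1 ≤ n) :=
      occ_cases f2
    omega

lemma walk_no_ray (hm : 1 ≤ m) (Hm : ¬ ∃ k, rOcc m n ω k ∧ k.1 = m) :
    ∀ N (x : ℤ), x ≤ -2 → walk m n ω N ≠ ((x, n), Dir.R) := by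
  intro N
  induction N with
  | zero =>
    intro x hx he
    have : (-1 : ℤ) = x := congrArg (fun s => s.1.1) he
    omega
  | succ N ih =>
    intro x hx he
    rw [walk_succ] at he
    obtain ⟨iL, iR, -, -⟩ := walk_inv hm Hm N
    have := pred_ray iL iR (show x ≤ -1 by omega) he
    exact ih (x - 1) (by omega) this

lemma walk_x_ge (hm : 1 ≤ m) (Hm : ¬ ∃ k, rOcc m n ω k ∧ k.1 = m) (N : ℕ) :
    -1 ≤ (walk m n ω N).1.1 := by
  by_contra hc
  push_neg at hc
  obtain ⟨iL, iR, -, -⟩ := walk_inv hm Hm N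
  obtain ⟨hy, hd⟩ := ray_char iL iR (by omega)
  apply walk_no_ray hm Hm N ((walk m n ω N).1.1) (by omega)
  exact prod_eq' (prod_eq rfl hy) hd

lemma walk_back (hm : 1 ≤ m) (Hm : ¬ ∃ k, rOcc m n ω k ∧ k.1 = m) {i j : ℕ}
    (h : walk m n ω (i + 1) = walk m n ω (j + 1)) : walk m n ω i = walk m n ω j := by
  obtain ⟨aL, aR, -, -⟩ := walk_inv hm Hm i
  obtain ⟨bL, bR, -, -⟩ := walk_inv hm Hm j
  rw [walk_succ, walk_succ] at h
  exact wstep_inj aL aR bL bR h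

lemma walk_diff (hm : 1 ≤ m) (Hm : ¬ ∃ k, rOcc m n ω k ∧ k.1 = m) :
    ∀ i p, walk m n ω i = walk m n ω (i + p) → walk m n ω 0 = walk m n ω p := by
  intro i
  induction i with
  | zero => intro p h; simpa using h
  | succ i ih =>
    intro p h
    apply ih
    apply walk_back hm Hm
    rw [show i + 1 + p = i + p + 1 from by omega] at h
    exact h

lemma key_norepeat (hm : 1 ≤ m) (Hm : ¬ ∃ k, rOcc m n ω k ∧ k.1 = m) {i j : ℕ}
    (hij : i < j) (hw : walk m n ω i = walk m n ω j) : False := by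
  have hp : walk m n ω 0 = walk m n ω (j - i) := by
    apply walk_diff hm Hm i
    rw [show i + (j - i) = j from by omega]
    exact hw
  obtain ⟨cL, cR, -, -⟩ := walk_inv hm Hm (j - i - 1)
  have hs : wstep m n ω (walk m n ω (j - i - 1)) = (((-1 : ℤ), n), Dir.R) := by
    rw [← walk_succ, show j - i - 1 + 1 = j - i from by omega, ← hp]
    rfl
  have hpred := pred_ray cL cR (show (-1 : ℤ) ≤ -1 from le_refl _) hs
  exact walk_no_ray hm Hm (j - i - 1) (-1 - 1) (by omega) hpred

lemma exists_bottom (hm : 1 ≤ m) (hn : 1 ≤ n) (Hm : ¬ ∃ k, rOcc m n ω k ∧ k.1 = m) :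
    ∃ N, (Lsq (walk m n ω N)).2 ≤ 0 := by
  by_contra hc
  push_neg at hc
  set T : Finset (ℤ × ℤ × ℤ) :=
    Finset.Icc (-1) m ×ˢ Finset.Icc 0 n ×ˢ Finset.Icc 0 3 with hT
  have hmaps : ∀ N : ℕ,
      ((walk m n ω N).1.1, (walk m n ω N).1.2, dirZ (walk m n ω N).2) ∈ T := by
    intro N
    obtain ⟨iL, iR, -, -⟩ := walk_inv hm Hm N
    have hb := corner_bound (walk m n ω N)
    have hbl := corner_bound_L (walk m n ω N)
    have hRb : (Rsq (walk m n ω N)).1 ≤ m ∧ (Rsq (walk m n ω N)).2 ≤ n := by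
      rcases occ_cases iR with ⟨ha, hb2⟩ | ⟨ha, hb2, hc2, hd2⟩ <;> constructor <;> omega
    have hx1 := walk_x_ge hm Hm N
    have hy1 := hc N
    have hd := dirZ_bound (walk m n ω N).2
    rw [hT]
    simp only [Finset.mem_product, Finset.mem_Icc]
    refine ⟨⟨hx1, by omega⟩, ⟨by omega, by omega⟩, hd.1, hd.2⟩
  obtain ⟨i, -, j, -, hij, hfe⟩ :=
    Finset.exists_ne_map_eq_of_card_lt_of_maps_to
      (s := Finset.range (T.card + 1)) (t := T)
      (by rw [Finset.card_range]; omega) (fun a _ => hmaps a)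
  have h1 : (walk m n ω i).1.1 = (walk m n ω j).1.1 := congrArg (fun t => t.1) hfe
  have h2 : (walk m n ω i).1.2 = (walk m n ω j).1.2 := congrArg (fun t => t.2.1) hfe
  have h3 : dirZ (walk m n ω i).2 = dirZ (walk m n ω j).2 := congrArg (fun t => t.2.2) hfe
  have hw : walk m n ω i = walk m n ω j := prod_eq' (prod_eq h1 h2) (dirZ_inj h3)
  rcases Nat.lt_or_ge i j with hlt | hge
  · exact key_norepeat hm Hm hlt hw
  · have : j < i := by omega
    exact key_norepeat hm Hm this hw.symm

end E

end PercDual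

namespace PercDual

lemma chain_to_chain' {α : Type*} {r r' : α → α → Prop} (hsub : ∀ x y, r x y → r' x y) :
    ∀ (a : α) (l : List α), List.Chain r a l → List.Chain' r' (a :: l)
  | _, [], _ => by simp [List.Chain']
  | a, b :: u, h => by
    rcases List.chain_cons.mp h with ⟨hab, hb⟩
    exact List.isChain_cons_cons.mpr ⟨hsub _ _ hab, chain_to_chain' hsub b u hb⟩

section F
variable {m n : ℤ} {ω : ℤ × ℤ → Bool}

lemma extract_occ (hm : 1 ≤ m) (hn : 1 ≤ n) {rs : ℤ × ℤ} (hro : rOcc m n ω rs)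
    (hx : rs.1 = m) : ∃ J, IsLRCrossing plusAdj m n J ∧ ∀ k ∈ J, ω k = true := by
  obtain ⟨l, hch, hlast⟩ := List.exists_isChain_cons_of_relationReflTransGen hro
  have hcne : (((0 : ℤ), n) :: l) ≠ [] := by simp
  have hlast? : (((0 : ℤ), n) :: l).getLast? = some rs := by
    rw [List.getLast?_eq_getLast hcne]
    exact congrArg some hlast
  have hallocc : ∀ k ∈ ((0 : ℤ), n) :: l, occS m n ω k = true :=
    chain_all hch (fun x y hr => hr.2.1) (occS_quad (by norm_num) (le_refl n))
  have hch' : (((0 : ℤ), n) :: l).Chain' plusAdj :=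
    chain_to_chain' (fun x y hr => hr.2.2) _ _ hch
  obtain ⟨s, hs1, hs2, hs3, ⟨e, he, hqe⟩, hs5⟩ :=
    cut_last (Q := fun k : ℤ × ℤ => k.1 ≤ 0) (((0 : ℤ), n) :: l)
      ⟨((0 : ℤ), n), List.mem_cons_self, by norm_num⟩
  obtain ⟨e0, T, rfl⟩ : ∃ e0 T, s = e0 :: T := by
    cases s with
    | nil => simp at hs1
    | cons a t => exact ⟨a, t, rfl⟩
  have he0 : e0 = e := by simpa using he
  subst he0
  have hqe0 : e0.1 ≤ 0 := hqe
  have hTne : T ≠ [] := by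
    rintro rfl
    have he0rs : e0 = rs := by
      have h := hs2.trans hlast?
      simpa using h
    rw [he0rs] at hqe0
    omega
  have hsch : (e0 :: T).Chain' plusAdj := hch'.suffix hs3
  have hchT : T.Chain' plusAdj := hsch.tail
  have hTsub : ∀ k ∈ T, k ∈ ((0 : ℤ), n) :: l := fun k hk =>
    hs3.subset (List.mem_cons_of_mem _ hk)
  have hTx : ∀ k ∈ T, 1 ≤ k.1 := by
    intro k hk
    have := hs5 k hk
    omega
  have hTP : ∀ k ∈ T, inRect m n k ∧ ω k = true := fun k hk =>
    occS_rect_true (hallocc k (hTsub k hk)) (hTx k hk)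
  have hTh : T.head? = some (T.head hTne) := List.head?_eq_head hTne
  have hadj : plusAdj e0 (T.head hTne) := by
    have h := (List.isChain_cons.mp hsch).1
    exact h (T.head hTne) (by rw [hTh]; rfl)
  have hhx : (T.head hTne).1 = 1 := by
    have h1 := hTx _ (List.head_mem hTne)
    rcases plusAdj_coords hadj with ⟨-, hd⟩ | ⟨hd, -⟩ <;> omega
  have hTlast : T.getLast? = some rs := by
    have h := glcons (a := e0) hTne
    rw [← h, hs2, hlast?]
  obtain ⟨J, hJ1, hJ2, hJ3, hJ4, hJ5, hJ6⟩ :=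
    extract Prod.fst (fun k => inRect m n k ∧ ω k = true) T hchT hTP hTh hhx hTlast hx
  exact ⟨J, ⟨hJ1, hJ2, hJ3, fun k hk => (hJ4 k hk).1, hJ5, hJ6⟩, fun k hk => (hJ4 k hk).2⟩

lemma extract_vac (hm : 1 ≤ m) (hn : 1 ≤ n) {lf : ℤ × ℤ} (hrv : rVac m n ω lf)
    (hy : lf.2 ≤ 0) : ∃ J, IsTDCrossing starAdj m n J ∧ ∀ k ∈ J, ω k = false := by
  obtain ⟨l, hch, hlast⟩ := List.exists_isChain_cons_of_relationReflTransGen hrv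
  have hcne : (((0 : ℤ), n + 1) :: l) ≠ [] := by simp
  have hchead : (((0 : ℤ), n + 1) :: l).head? = some ((0 : ℤ), n + 1) := rfl
  have hlast? : (((0 : ℤ), n + 1) :: l).getLast? = some lf := by
    rw [List.getLast?_eq_getLast hcne]
    exact congrArg some hlast
  have hallP : ∀ k ∈ ((0 : ℤ), n + 1) :: l, occS m n ω k = false ∧ Good m n k :=
    chain_all hch (fun x y hr => ⟨hr.2.1, hr.2.2.2.2⟩) ⟨occS_top 0, Or.inl (le_refl _)⟩
  have hch' : (((0 : ℤ), n + 1) :: l).Chain' starAdj :=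
    chain_to_chain' (fun x y hr => hr.2.2.1) _ _ hch
  have hmemlf : lf ∈ ((0 : ℤ), n + 1) :: l :=
    List.mem_of_mem_getLast? (Option.mem_def.mpr hlast?)
  obtain ⟨p, hp1, hp2, hp3, ⟨e, he, hqe⟩, hp5⟩ :=
    cut_first (Q := fun k : ℤ × ℤ => k.2 ≤ 0) _ ⟨lf, hmemlf, hy⟩
  have hqe' : e.2 ≤ 0 := hqe
  have hpch : p.Chain' starAdj := hch'.prefix hp3
  have hphead : p.head? = some ((0 : ℤ), n + 1) := by rw [hp2]; exact hchead
  have hplen : 2 ≤ p.length := by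
    rcases p with _ | ⟨x0, _ | ⟨x1, u⟩⟩
    · simp at hp1
    · exfalso
      have hx0 : x0 = ((0 : ℤ), n + 1) := by simpa using hphead
      have he' : e = x0 := (by simpa using he : x0 = e).symm
      rw [he', hx0] at hqe'
      have h0 : n + 1 ≤ (0 : ℤ) := hqe'
      omega
    · exact (by omega : 2 ≤ u.length + 1 + 1)
  have hpd : p.dropLast ++ [p.getLast hp1] = p := List.dropLast_append_getLast hp1
  have hT3ne : p.dropLast ≠ [] := by
    apply List.ne_nil_of_length_pos
    rw [List.length_dropLast]
    omega
  have hegl : p.getLast hp1 = e := by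
    have h := List.getLast?_eq_getLast hp1
    rw [h] at he
    exact Option.some.inj he
  have hT3ch : p.dropLast.Chain' starAdj := hpch.prefix ⟨[p.getLast hp1], hpd⟩
  have hT3head : p.dropLast.head? = some ((0 : ℤ), n + 1) := by
    rcases p with _ | ⟨x0, t⟩
    · simp at hp1
    · have ht : t ≠ [] := by
        rintro rfl
        simp at hplen
      rw [dlcons ht]
      simpa using hphead
  have hT3g : p.dropLast.getLast? = some (p.dropLast.getLast hT3ne) :=
    List.getLast?_eq_getLast _
  have hg3star : starAdj (p.dropLast.getLast hT3ne) e := by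
    have hcc : (p.dropLast ++ [p.getLast hp1]).Chain' starAdj := by rw [hpd]; exact hpch
    have h := (List.isChain_append.mp hcc).2.2
    have h2 := h (p.dropLast.getLast hT3ne) (Option.mem_def.mpr hT3g) (p.getLast hp1) rfl
    rw [hegl] at h2
    exact h2
  have hT3y1 : ∀ k ∈ p.dropLast, 1 ≤ k.2 := by
    intro k hk
    have := hp5 k hk
    omega
  have hg3y : (p.dropLast.getLast hT3ne).2 = 1 := by
    have h1 := hT3y1 _ (List.getLast_mem hT3ne)
    have hcs := starAdj_coords hg3star
    omega
  have htopmem : ((0 : ℤ), n + 1) ∈ p.dropLast :=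
    List.mem_of_mem_head? (Option.mem_def.mpr hT3head)
  obtain ⟨s4, hs41, hs42, hs43, ⟨e4, he4, hqe4⟩, hs45⟩ :=
    cut_last (Q := fun k : ℤ × ℤ => n + 1 ≤ k.2) p.dropLast
      ⟨((0 : ℤ), n + 1), htopmem, le_refl _⟩
  obtain ⟨e40, T5, rfl⟩ : ∃ e40 T5, s4 = e40 :: T5 := by
    cases s4 with
    | nil => simp at hs41
    | cons a t => exact ⟨a, t, rfl⟩
  have he40 : e40 = e4 := by simpa using he4
  have hqe4' : n + 1 ≤ e40.2 := by rw [he40]; exact hqe4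
  have hT5ne : T5 ≠ [] := by
    rintro rfl
    have hgl : e40 = p.dropLast.getLast hT3ne := by
      have h := hs42
      rw [hT3g] at h
      simpa using h
    rw [hgl] at hqe4'
    omega
  have hs4ch : (e40 :: T5).Chain' starAdj := hT3ch.suffix hs43
  have hT5ch : T5.Chain' starAdj := hs4ch.tail
  have hT5h : T5.head? = some (T5.head hT5ne) := List.head?_eq_head hT5ne
  have hadj45 : starAdj e40 (T5.head hT5ne) :=
    (List.isChain_cons.mp hs4ch).1 _ (by rw [hT5h]; rfl)
  have hT5yle : ∀ k ∈ T5, k.2 ≤ n := by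
    intro k hk
    have := hs45 k hk
    omega
  have hh5y : (T5.head hT5ne).2 = n := by
    have h1 := hT5yle _ (List.head_mem hT5ne)
    have hcs := starAdj_coords hadj45
    omega
  have hT5sub3 : ∀ k ∈ T5, k ∈ p.dropLast := fun k hk =>
    hs43.subset (List.mem_cons_of_mem _ hk)
  have hT5P : ∀ k ∈ T5, inRect m n k ∧ ω k = false := by
    intro k hk
    have hk3 := hT5sub3 k hk
    have hkp : k ∈ p := by
      rw [← hpd]
      exact List.mem_append_left _ hk3
    have hkc := hp3.subset hkp
    obtain ⟨hocc, hgood⟩ := hallP k hkc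
    have hy1 := hT3y1 k hk3
    have hy2 := hT5yle k hk
    have hgood' : n + 1 ≤ k.2 ∨ k.2 ≤ 0 ∨ (1 ≤ k.1 ∧ k.1 ≤ m) := hgood
    have hxx : 1 ≤ k.1 ∧ k.1 ≤ m := by omega
    have hrect : inRect m n k := ⟨hxx.1, hxx.2, hy1, hy2⟩
    exact ⟨hrect, occS_rect_false hocc hrect⟩
  have hT5last : T5.getLast? = some (p.dropLast.getLast hT3ne) := by
    have h := glcons (a := e40) hT5ne
    rw [← h, hs42, hT3g]
  obtain ⟨J, hJ1, hJ2, hJ3, hJ4, hJ5, hJ6⟩ :=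
    extract Prod.snd (fun k => inRect m n k ∧ ω k = false) T5 hT5ch hT5P hT5h hh5y hT5last hg3y
  exact ⟨J, ⟨hJ1, hJ2, hJ3, fun k hk => (hJ4 k hk).1, hJ5, hJ6⟩, fun k hk => (hJ4 k hk).2⟩

lemma exists_TD (hm : 1 ≤ m) (hn : 1 ≤ n)
    (hA : ¬ ∃ J, IsLRCrossing plusAdj m n J ∧ ∀ k ∈ J, ω k = true) :
    ∃ J, IsTDCrossing starAdj m n J ∧ ∀ k ∈ J, ω k = false := by
  have Hm : ¬ ∃ k, rOcc m n ω k ∧ k.1 = m := by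
    rintro ⟨rs, h1, h2⟩
    exact hA (extract_occ hm hn h1 h2)
  obtain ⟨N, hN⟩ := exists_bottom hm hn Hm
  obtain ⟨-, -, -, hLV⟩ := walk_inv hm Hm N
  exact extract_vac hm hn hLV hN

end F

end PercDual


/-- Exactly one of the following occurs: `Λ` contains an occupied plus connected
left-right crossing, or `Λ` contains a vacant star connected top-down crossing. -/
theorem occupied_plus_LR_xor_vacant_star_TD
    (m n : ℤ) (hm : 1 ≤ m) (hn : 1 ≤ n) (ω : ℤ × ℤ → Bool) :
    Xor' (∃ J : List (ℤ × ℤ), IsLRCrossing plusAdj m n J ∧ ∀ k ∈ J, ω k = true)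
         (∃ J : List (ℤ × ℤ), IsTDCrossing starAdj m n J ∧ ∀ k ∈ J, ω k = false) := by
  by_cases hA : ∃ J : List (ℤ × ℤ), IsLRCrossing plusAdj m n J ∧ ∀ k ∈ J, ω k = true
  · exact Or.inl ⟨hA, fun hB => PercDual.not_both hm hn hA hB⟩
  · exact Or.inr ⟨PercDual.exists_TD hm hn hA, hA⟩
end

section
/- For every assignment of states (occupied or vacant) to the squares of Λ = {1,…,m} × {1,…,n}, exactly one of the following two events occurs: Λ contains an occupied star connected left-right crossing, or Λ contains a vacant plus connected top-down crossing. -/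
section ChainCompat
variable {α β : Type*} {R : α → α → Prop}

theorem List.chain'_cons {a b : α} {l : List α} :
    List.Chain' R (a :: b :: l) ↔ R a b ∧ List.Chain' R (b :: l) := List.isChain_cons_cons

@[simp] theorem List.chain'_nil : List.Chain' R [] := List.isChain_nil

@[simp] theorem List.chain'_singleton (a : α) : List.Chain' R [a] := List.isChain_singleton a

theorem List.chain'_cons' {x : α} {l : List α} :
    List.Chain' R (x :: l) ↔ (∀ y ∈ l.head?, R x y) ∧ List.Chain' R l := List.isChain_cons

theorem List.chain'_append {l₁ l₂ : List α} :
    List.Chain' R (l₁ ++ l₂) ↔ List.Chain' R l₁ ∧ List.Chain' R l₂ ∧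
      ∀ x ∈ l₁.getLast?, ∀ y ∈ l₂.head?, R x y := List.isChain_append

theorem List.chain'_pair {x y : α} : List.Chain' R [x, y] ↔ R x y := List.isChain_pair

theorem List.chain'_map (f : β → α) {l : List β} :
    List.Chain' R (l.map f) ↔ List.Chain' (fun a b => R (f a) (f b)) l := List.isChain_map f

theorem List.chain'_range_succ (r : ℕ → ℕ → Prop) (n : ℕ) :
    List.Chain' r (List.range n.succ) ↔ ∀ m < n, r m m.succ := List.isChain_range_succ r n

theorem List.Chain'.prefix {l₁ l₂ : List α} (h : List.Chain' R l₂) (hp : l₁ <+: l₂) :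
    List.Chain' R l₁ := List.IsChain.prefix h hp

theorem List.Chain'.suffix {l₁ l₂ : List α} (h : List.Chain' R l₂) (hp : l₁ <:+ l₂) :
    List.Chain' R l₁ := List.IsChain.suffix h hp
end ChainCompat

section ListUtil
variable {α : Type*} {R : α → α → Prop}

lemma getLast?_cons_ne {a : α} {l : List α} (h : l ≠ []) :
    (a :: l).getLast? = l.getLast? := by
  obtain ⟨c, t, rfl⟩ := List.exists_cons_of_ne_nil h
  rw [List.getLast?_cons_cons]

/-- parity of flips equals whether endpoints agree -/
lemma flip_parity (f : α → Bool) :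
    ∀ (l : List α) (a b : α), (a :: l).getLast? = some b →
      ((a :: l).zip l).countP (fun s => f s.1 != f s.2) % 2 = (if f a = f b then 0 else 1) := by
  intro l
  induction l with
  | nil => intro a b hb; simp at hb; subst hb; simp
  | cons c t ih =>
    intro a b hb
    have hb' : (c :: t).getLast? = some b := by
      rwa [List.getLast?_cons_cons] at hb
    have ih' := ih c b hb'
    have hz : ((a :: c :: t).zip (c :: t)) = (a, c) :: ((c :: t).zip t) := by simp
    rw [hz, List.countP_cons]
    rcases ha : f a <;> rcases hc2 : f c <;> rcases hb2 : f b <;>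
      simp [ha, hc2, hb2, Nat.add_mod] at ih' ⊢ <;> omega

lemma zip_chain_mem : ∀ (l : List α), List.Chain' R l →
    ∀ p ∈ l.zip l.tail, R p.1 p.2 ∧ p.1 ∈ l ∧ p.2 ∈ l := by
  intro l
  induction l with
  | nil => simp
  | cons a t ih =>
    intro hc p hp
    match t, hp with
    | b :: t', hp =>
      rw [List.chain'_cons] at hc
      simp only [List.tail_cons, List.zip_cons_cons, List.mem_cons] at hp
      rcases hp with rfl | hp
      · exact ⟨hc.1, by simp, by simp⟩
      · have := ih hc.2 p (by simpa using hp)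
        exact ⟨this.1, by simp [this.2.1], by simp [this.2.2]⟩

lemma countP_split3 (p p1 p2 p3 : α → Bool) (l : List α)
    (h : ∀ x ∈ l, (p x = true ↔ (p1 x = true ∨ p2 x = true ∨ p3 x = true)))
    (h12 : ∀ x ∈ l, ¬(p1 x = true ∧ p2 x = true))
    (h13 : ∀ x ∈ l, ¬(p1 x = true ∧ p3 x = true))
    (h23 : ∀ x ∈ l, ¬(p2 x = true ∧ p3 x = true)) :
    l.countP p = l.countP p1 + l.countP p2 + l.countP p3 := by
  induction l with
  | nil => simp
  | cons a t ih =>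
    have ih' := ih (fun x hx => h x (by simp [hx])) (fun x hx => h12 x (by simp [hx]))
      (fun x hx => h13 x (by simp [hx])) (fun x hx => h23 x (by simp [hx]))
    have ha := h a (by simp)
    have ha12 := h12 a (by simp); have ha13 := h13 a (by simp); have ha23 := h23 a (by simp)
    simp only [List.countP_cons, ih']
    by_cases c1 : p1 a = true <;> by_cases c2 : p2 a = true <;> by_cases c3 : p3 a = true <;>
      by_cases c : p a = true <;> simp [c1, c2, c3, c] at ha ha12 ha13 ha23 ⊢ <;> omega

/-- remove consecutive equal elements from an eq-or-adj chain -/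
lemma dedup_chain : ∀ (l : List α), List.Chain' (fun a b => a = b ∨ R a b) l →
    ∃ l', List.Chain' R l' ∧ l'.head? = l.head? ∧ l'.getLast? = l.getLast? ∧
      ∀ x ∈ l', x ∈ l := by
  intro l
  induction l with
  | nil => exact fun _ => ⟨[], by simp⟩
  | cons a t ih =>
    intro hc
    match t, hc with
    | [], _ => exact ⟨[a], by simp⟩
    | b :: t', hc =>
      rw [List.chain'_cons] at hc
      obtain ⟨l', hl'c, hl'h, hl'l, hl'm⟩ := ih hc.2
      rcases hc.1 with rfl | hadj
      · refine ⟨l', hl'c, ?_, ?_, fun x hx => List.mem_cons_of_mem a (hl'm x hx)⟩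
        · rw [hl'h]; simp
        · rw [hl'l, List.getLast?_cons_cons]
      · have hne : l' ≠ [] := by
          intro h; rw [h] at hl'h; simp at hl'h
        refine ⟨a :: l', ?_, by simp, ?_, ?_⟩
        · rw [List.chain'_cons']
          refine ⟨fun y hy => ?_, hl'c⟩
          rw [hl'h] at hy; simp at hy; subst hy; exact hadj
        · rw [getLast?_cons_ne hne, hl'l, List.getLast?_cons_cons]
        · intro x hx
          rcases List.mem_cons.mp hx with rfl | hx
          · simp
          · exact List.mem_cons_of_mem a (hl'm x hx)

lemma split_of_not_nodup : ∀ (l : List α), ¬ l.Nodup →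
    ∃ (x : α) (l₁ l₂ l₃ : List α), l = l₁ ++ x :: (l₂ ++ x :: l₃) := by
  intro l
  induction l with
  | nil => simp
  | cons a t ih =>
    intro h
    rw [List.nodup_cons] at h
    by_cases hm : a ∈ t
    · obtain ⟨l₂, l₃, rfl⟩ := List.append_of_mem hm
      exact ⟨a, [], l₂, l₃, by simp⟩
    · obtain ⟨x, l₁, l₂, l₃, rfl⟩ := ih (fun hn => h ⟨hm, hn⟩)
      exact ⟨x, a :: l₁, l₂, l₃, by simp⟩

/-- from any chain extract a nodup chain with the same endpoints -/
lemma nodup_of_chain : ∀ (N : ℕ) (l : List α), l.length ≤ N → List.Chain' R l →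
    ∃ l', l'.Nodup ∧ List.Chain' R l' ∧ l'.head? = l.head? ∧ l'.getLast? = l.getLast? ∧
      ∀ x ∈ l', x ∈ l := by
  intro N
  induction N with
  | zero =>
    intro l hl _
    have : l = [] := by cases l <;> simp_all
    subst this; exact ⟨[], by simp⟩
  | succ N ih =>
    intro l hl hc
    by_cases hnd : l.Nodup
    · exact ⟨l, hnd, hc, rfl, rfl, fun x hx => hx⟩
    · obtain ⟨x, l₁, l₂, l₃, rfl⟩ := split_of_not_nodup l hnd
      have hc' : List.Chain' R (l₁ ++ x :: l₃) := by
        rw [List.chain'_append]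
        refine ⟨hc.prefix ⟨x :: (l₂ ++ x :: l₃), by simp⟩, ?_, ?_⟩
        · exact hc.suffix ⟨l₁ ++ x :: l₂, by simp⟩
        · rw [List.chain'_append] at hc
          intro p hp y hy
          exact hc.2.2 p hp y (by simp_all)
      have hlen : (l₁ ++ x :: l₃).length ≤ N := by
        simp only [List.length_append, List.length_cons] at hl ⊢
        omega
      obtain ⟨l', h1, h2, h3, h4, h5⟩ := ih _ hlen hc'
      refine ⟨l', h1, h2, ?_, ?_, ?_⟩
      · rw [h3]
        cases l₁ <;> simp
      · have e1 : (x :: (l₂ ++ x :: l₃)) = (x :: l₂) ++ (x :: l₃) := by simp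
        rw [h4, e1, List.getLast?_append, List.getLast?_append, List.getLast?_append]
        obtain ⟨v, hv⟩ := Option.isSome_iff_exists.mp (List.getLast?_isSome.mpr (List.cons_ne_nil x l₃))
        rw [hv]
        simp
      · intro y hy
        have := h5 y hy
        simp only [List.mem_append, List.mem_cons] at this ⊢
        tauto

/-- constancy of a function along a chain under local equality -/
lemma chain_const {g : α → β} : ∀ (l : List α), List.Chain' R l →
    (∀ a b, a ∈ l → b ∈ l → R a b → g a = g b) →
    ∀ x ∈ l, ∀ y ∈ l, g x = g y := by
  intro l
  induction l with
  | nil => simp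
  | cons a t ih =>
    intro hc hloc
    have key : ∀ x ∈ a :: t, g x = g a := by
      intro x hx
      rcases List.mem_cons.mp hx with rfl | hx
      · rfl
      · match t, hx with
        | b :: t', hx =>
          rw [List.chain'_cons] at hc
          have hab : g a = g b := hloc a b (by simp) (by simp) hc.1
          have := ih hc.2 (fun u v hu hv huv => hloc u v (List.mem_cons_of_mem a hu) (List.mem_cons_of_mem a hv) huv) x hx b (by simp)
          rw [this, ← hab]
    intro x hx y hy
    rw [key x hx, key y hy]
end ListUtil

section Extract
variable {α : Type*}

lemma prefix_head? {l' l : List α} (h : l' <+: l) (hne : l' ≠ []) : l'.head? = l.head? := by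
  obtain ⟨r, rfl⟩ := h
  match l', hne with
  | a :: t, _ => simp

lemma suffix_getLast? {l' l : List α} (h : l' <:+ l) (hne : l' ≠ []) : l'.getLast? = l.getLast? := by
  obtain ⟨r, rfl⟩ := h
  rw [List.getLast?_append]
  match hv : l'.getLast? with
  | some v => simp
  | none => exact absurd (List.getLast?_isSome.mpr hne) (by simp [hv])

lemma first_cut (p : α → Bool) (l : List α) (hex : ∃ x ∈ l, p x = true) :
    ∃ l₁ e, (l₁ ++ [e]) <+: l ∧ (∀ x ∈ l₁, p x = false) ∧ p e = true := by
  have hd : l.dropWhile (fun x => !p x) ≠ [] := by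
    intro h
    rw [List.dropWhile_eq_nil_iff] at h
    obtain ⟨x, hx, hpx⟩ := hex
    have := h x hx; simp [hpx] at this
  refine ⟨l.takeWhile (fun x => !p x), (l.dropWhile (fun x => !p x)).head hd, ?_, ?_, ?_⟩
  · refine ⟨(l.dropWhile (fun x => !p x)).tail, ?_⟩
    rw [List.append_assoc, List.singleton_append, List.cons_head_tail,
      List.takeWhile_append_dropWhile]
  · intro x hx
    have := List.mem_takeWhile_imp hx
    simpa using this
  · have := List.head_dropWhile_not (fun x => !p x) hd
    simpa using this

lemma last_cut (p : α → Bool) (l : List α) (hex : ∃ x ∈ l, p x = true) :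
    ∃ e l₂, (e :: l₂) <:+ l ∧ p e = true ∧ ∀ x ∈ l₂, p x = false := by
  obtain ⟨l₁, e, hpre, hall, hpe⟩ := first_cut p l.reverse (by
    obtain ⟨x, hx, hpx⟩ := hex; exact ⟨x, by simpa using hx, hpx⟩)
  refine ⟨e, l₁.reverse, ?_, hpe, fun x hx => hall x (by simpa using hx)⟩
  have : (l₁ ++ [e]).reverse <:+ l.reverse.reverse := by
    rw [List.reverse_suffix]
    simpa using hpre
  simpa using this

lemma extract_crossing {adj : α → α → Prop} {P : α → Prop} {pre : α → Prop}
    (proj : α → ℤ) (M : ℤ) (hM1 : 1 ≤ M)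
    (hadj : ∀ a b, adj a b → |proj a - proj b| ≤ 1)
    (hP : ∀ x, pre x → 1 ≤ proj x → proj x ≤ M → P x)
    (l : List α) (hne : l ≠ [])
    (hc : List.Chain' (fun a b => a = b ∨ adj a b) l)
    (hpre : ∀ x ∈ l, pre x)
    (hhead : ∀ x, l.head? = some x → proj x ≤ 0)
    (hlast : ∀ x, l.getLast? = some x → M ≤ proj x) :
    ∃ J : List α, J ≠ [] ∧ J.Nodup ∧ J.Chain' adj ∧ (∀ k ∈ J, P k) ∧
      (∀ k ∈ J, (proj k = 1 ↔ J.head? = some k)) ∧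
      (∀ k ∈ J, (proj k = M ↔ J.getLast? = some k)) := by
  classical
  have hD : ∀ a b, adj a b → -1 ≤ proj a - proj b ∧ proj a - proj b ≤ 1 :=
    fun a b h => abs_le.mp (hadj a b h)
  -- last element of l
  obtain ⟨z, hz⟩ := Option.isSome_iff_exists.mp (List.getLast?_isSome.mpr hne)
  have hzM : M ≤ proj z := hlast z hz
  -- Step 1 : cut at first element with proj ≥ M
  obtain ⟨l₁, e, hpre1, hl₁, hpe⟩ := first_cut (fun x => decide (M ≤ proj x)) l
    ⟨z, List.mem_of_mem_getLast? (hz ▸ rfl), by simpa using hzM⟩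
  set l₂ := l₁ ++ [e] with hl₂
  have hl₂ne : l₂ ≠ [] := by simp [hl₂]
  have hc₂ : List.Chain' (fun a b => a = b ∨ adj a b) l₂ := hc.prefix hpre1
  have hl₂head : l₂.head? = l.head? := prefix_head? hpre1 hl₂ne
  have hl₁lt : ∀ x ∈ l₁, proj x < M := by
    intro x hx; have := hl₁ x hx; simpa using this
  -- l₁ is nonempty (head of l has proj ≤ 0 < M)
  have hl₁ne : l₁ ≠ [] := by
    intro h
    rw [h] at hl₂
    have : l₂.head? = some e := by simp [hl₂]
    have h0 := hhead e (by rw [← hl₂head, this])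
    have : M ≤ proj e := by simpa using hpe
    omega
  -- proj e = M
  have hpeM : proj e = M := by
    obtain ⟨w, hw⟩ := Option.isSome_iff_exists.mp (List.getLast?_isSome.mpr hl₁ne)
    have hwl : w ∈ l₁ := List.mem_of_mem_getLast? (hw ▸ rfl)
    have hrel := (List.chain'_append.mp (hl₂ ▸ hc₂)).2.2 w (by rw [hw]; rfl) e rfl
    have hMle : M ≤ proj e := by simpa using hpe
    rcases hrel with rfl | hadj'
    · exact absurd (hl₁lt w hwl) (by omega)
    · have h1 := hD w e hadj'
      have h2 := hl₁lt w hwl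
      omega
  have hl₂le : ∀ x ∈ l₂, proj x ≤ M := by
    intro x hx
    rcases List.mem_append.mp hx with hx | hx
    · exact le_of_lt (hl₁lt x hx)
    · simp at hx; subst hx; omega
  have hl₂last : l₂.getLast? = some e := by
    rw [hl₂, List.getLast?_append]; simp
  -- Step 2 : cut from last element with proj ≤ 0
  obtain ⟨e₀, J₀, hsuf, hpe₀, hJ₀pos⟩ := last_cut (fun x => decide (proj x ≤ 0)) l₂ (by
    obtain ⟨h₀, hh₀⟩ := Option.isSome_iff_exists.mp (by simp [List.isSome_head?, hl₂ne] :
      (l₂.head?).isSome = true)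
    exact ⟨h₀, List.mem_of_mem_head? (hh₀ ▸ rfl), by
      have := hhead h₀ (by rw [← hl₂head, hh₀])
      simpa using this⟩)
  have hJ₀pos' : ∀ x ∈ J₀, 1 ≤ proj x := by
    intro x hx; have := hJ₀pos x hx; simp at this; omega
  have hce : List.Chain' (fun a b => a = b ∨ adj a b) (e₀ :: J₀) := hc₂.suffix hsuf
  have hJ₀ne : J₀ ≠ [] := by
    intro h
    have : (e₀ :: J₀).getLast? = some e₀ := by simp [h]
    rw [suffix_getLast? hsuf (by simp), hl₂last] at this
    have he : e₀ = e := by simpa using this.symm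
    subst he
    have := hpe₀; simp at this; omega
  have hJ₀last : J₀.getLast? = some e := by
    have h1 : (e₀ :: J₀).getLast? = J₀.getLast? := by
      obtain ⟨c, t, rfl⟩ := List.exists_cons_of_ne_nil hJ₀ne
      rw [List.getLast?_cons_cons]
    rw [← h1, suffix_getLast? hsuf (by simp), hl₂last]
  have hJ₀c : List.Chain' (fun a b => a = b ∨ adj a b) J₀ := hce.suffix ⟨[e₀], rfl⟩
  -- head of J₀ has proj = 1
  have hJ₀head : ∀ x, J₀.head? = some x → proj x = 1 := by
    intro x hx
    have hrel := (List.chain'_cons'.mp hce).1 x hx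
    have hx1 : 1 ≤ proj x := hJ₀pos' x (List.mem_of_mem_head? (hx ▸ rfl))
    have hpe₀' : proj e₀ ≤ 0 := by simpa using hpe₀
    rcases hrel with rfl | hadj'
    · omega
    · have := hD e₀ x hadj'; omega
  -- all mem facts
  have hJ₀mem : ∀ x ∈ J₀, x ∈ l := by
    intro x hx
    exact hpre1.sublist.mem (hsuf.sublist.mem (List.mem_cons_of_mem e₀ hx))
  have hJ₀P : ∀ x ∈ J₀, P x := by
    intro x hx
    refine hP x (hpre x (hJ₀mem x hx)) (hJ₀pos' x hx) (hl₂le x (hsuf.sublist.mem (List.mem_cons_of_mem e₀ hx)))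
  -- Step 3 : dedup
  obtain ⟨J₁, hJ₁c, hJ₁h, hJ₁l, hJ₁m⟩ := dedup_chain J₀ hJ₀c
  -- Step 4 : nodup
  obtain ⟨J₂, hJ₂nd, hJ₂c, hJ₂h, hJ₂l, hJ₂m⟩ := nodup_of_chain J₁.length J₁ le_rfl hJ₁c
  have hJ₂last : J₂.getLast? = some e := by rw [hJ₂l, hJ₁l, hJ₀last]
  have hJ₂ne : J₂ ≠ [] := by
    intro h; rw [h] at hJ₂last; simp at hJ₂last
  -- Step 5 : cut at first proj = M
  obtain ⟨t₁, e₁, hpre5, ht₁, hpe₁⟩ := first_cut (fun x => decide (proj x = M)) J₂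
    ⟨e, List.mem_of_mem_getLast? (hJ₂last ▸ rfl), by simpa using hpeM⟩
  set J₃ := t₁ ++ [e₁] with hJ₃
  have hJ₃ne : J₃ ≠ [] := by simp [hJ₃]
  have hJ₃nd : J₃.Nodup := hpre5.sublist.nodup hJ₂nd
  have hJ₃c : J₃.Chain' adj := hJ₂c.prefix hpre5
  have hJ₃h : J₃.head? = J₂.head? := prefix_head? hpre5 hJ₃ne
  have hJ₃last : J₃.getLast? = some e₁ := by rw [hJ₃, List.getLast?_append]; simp
  have hpe₁M : proj e₁ = M := by simpa using hpe₁
  have ht₁M : ∀ x ∈ t₁, proj x ≠ M := by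
    intro x hx; have := ht₁ x hx; simpa using this
  -- there is an element with proj = 1 in J₃ : the head
  have hJ₃head1 : ∀ x, J₃.head? = some x → proj x = 1 := by
    intro x hx
    rw [hJ₃h, hJ₂h, hJ₁h] at hx
    exact hJ₀head x hx
  -- Step 6 : cut from last proj = 1
  obtain ⟨e₂, t₂, hsuf6, hpe₂, ht₂⟩ := last_cut (fun x => decide (proj x = 1)) J₃ (by
    obtain ⟨h₀, hh₀⟩ := Option.isSome_iff_exists.mp (by simp [List.isSome_head?, hJ₃ne] :
      (J₃.head?).isSome = true)
    exact ⟨h₀, List.mem_of_mem_head? (hh₀ ▸ rfl), by simpa using hJ₃head1 h₀ hh₀⟩)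
  set J := e₂ :: t₂ with hJdef
  have hJne : J ≠ [] := by simp [hJdef]
  have hJnd : J.Nodup := hsuf6.sublist.nodup hJ₃nd
  have hJc : J.Chain' adj := hJ₃c.suffix hsuf6
  have hJlast : J.getLast? = J₃.getLast? := suffix_getLast? hsuf6 hJne
  have hJmem3 : ∀ x ∈ J, x ∈ J₃ := fun x hx => hsuf6.sublist.mem hx
  have hJmem0 : ∀ x ∈ J, x ∈ J₀ := fun x hx => hJ₁m x (hJ₂m x (hpre5.sublist.mem (hJmem3 x hx)))
  have hpe₂1 : proj e₂ = 1 := by simpa using hpe₂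
  have ht₂1 : ∀ x ∈ t₂, proj x ≠ 1 := by
    intro x hx; have := ht₂ x hx; simpa using this
  refine ⟨J, hJne, hJnd, hJc, fun k hk => hJ₀P k (hJmem0 k hk), ?_, ?_⟩
  · intro k hk
    constructor
    · intro hk1
      rcases List.mem_cons.mp hk with rfl | hk'
      · simp [hJdef]
      · exact absurd hk1 (ht₂1 k hk')
    · intro hh
      have : k = e₂ := by simp [hJdef] at hh; exact hh.symm
      subst this; exact hpe₂1
  · intro k hk
    constructor
    · intro hkM
      rcases List.mem_append.mp (hJmem3 k hk) with hk' | hk'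
      · exact absurd hkM (ht₁M k hk')
      · simp at hk'; subst hk'
        rw [hJlast, hJ₃last]
    · intro hh
      rw [hJlast, hJ₃last] at hh
      have : k = e₁ := by simpa using hh.symm
      subst this; exact hpe₁M
end Extract

section Parity


lemma plus_unfold {a b : ℤ × ℤ} (h : plusAdj a b) :
    (a.1 = b.1 ∧ (a.2 = b.2 + 1 ∨ b.2 = a.2 + 1)) ∨
    (a.2 = b.2 ∧ (a.1 = b.1 + 1 ∨ b.1 = a.1 + 1)) := by
  unfold plusAdj at h
  rcases abs_cases (a.1 - b.1) with ⟨h1, h2⟩ | ⟨h1, h2⟩ <;>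
    rcases abs_cases (a.2 - b.2) with ⟨h3, h4⟩ | ⟨h3, h4⟩ <;> omega

lemma star_bounds {a b : ℤ × ℤ} (h : starAdj a b) :
    -1 ≤ a.1 - b.1 ∧ a.1 - b.1 ≤ 1 ∧ -1 ≤ a.2 - b.2 ∧ a.2 - b.2 ≤ 1 ∧
      (a.1 - b.1 = 1 ∨ a.1 - b.1 = -1 ∨ a.2 - b.2 = 1 ∨ a.2 - b.2 = -1) := by
  unfold starAdj at h
  have h1 : |a.1 - b.1| ≤ 1 := h ▸ le_max_left _ _
  have h2 : |a.2 - b.2| ≤ 1 := h ▸ le_max_right _ _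
  have h3 := max_choice |a.1 - b.1| |a.2 - b.2|
  rcases abs_cases (a.1 - b.1) with ⟨g1, g2⟩ | ⟨g1, g2⟩ <;>
    rcases abs_cases (a.2 - b.2) with ⟨g3, g4⟩ | ⟨g3, g4⟩ <;> omega

/-- count of vertical steps between rows v, v+1 strictly right of column c -/
def Vcnt (S : List ((ℤ × ℤ) × (ℤ × ℤ))) (c v : ℤ) : ℕ :=
  S.countP (fun s => decide ((s.1.2 = v ∧ s.2.2 = v + 1 ∨ s.1.2 = v + 1 ∧ s.2.2 = v) ∧ c < s.1.1))

/-- count of horizontal steps in row v between columns c, c+1 -/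
def Hcnt (S : List ((ℤ × ℤ) × (ℤ × ℤ))) (c v : ℤ) : ℕ :=
  S.countP (fun s => decide (s.1.2 = v ∧ s.2.2 = v ∧
    (s.1.1 = c ∧ s.2.1 = c + 1 ∨ s.1.1 = c + 1 ∧ s.2.1 = c)))

variable {Qh : List (ℤ × ℤ)} {h e : ℤ × ℤ}

lemma vtot (hc : List.Chain' plusAdj Qh) (hh : Qh.head? = some h) (hl : Qh.getLast? = some e)
    (v : ℤ) (hhv : v + 1 ≤ h.2) (hev : e.2 ≤ v) (hcols : ∀ x ∈ Qh, 1 ≤ x.1) :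
    Vcnt (Qh.zip Qh.tail) 0 v % 2 = 1 := by
  match Qh, hh with
  | a :: l, hh =>
  have ha : a = h := by simpa using hh
  subst ha
  simp only [List.tail_cons]
  have hfp := flip_parity (fun q => decide (v + 1 ≤ q.2)) l a e hl
  beta_reduce at hfp
  have hmem := zip_chain_mem _ hc
  have hcong : ((a :: l).zip l).countP (fun s => (decide (v + 1 ≤ s.1.2)) != (decide (v + 1 ≤ s.2.2)))
      = Vcnt ((a :: l).zip ((a :: l).tail)) 0 v := by
    apply List.countP_congr
    intro s hs
    obtain ⟨hadj, hm1, hm2⟩ := hmem s (by simpa using hs)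
    have hp := plus_unfold hadj
    have hc1 := hcols s.1 hm1
    simp only [bne_iff_ne, ne_eq, decide_eq_true_eq, decide_eq_decide]
    constructor
    · intro hne
      refine ⟨?_, by omega⟩
      omega
    · intro ⟨h1, h2⟩
      omega
  rw [List.tail_cons] at hcong
  rw [← hcong, hfp]
  have h1 : (decide (v + 1 ≤ a.2) : Bool) = true := by simpa using hhv
  have h2 : (decide (v + 1 ≤ e.2) : Bool) = false := by simp; omega
  rw [h1, h2]
  simp

lemma region_flip (hc : List.Chain' plusAdj Qh) (hh : Qh.head? = some h) (hl : Qh.getLast? = some e)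
    (c v : ℤ) (hhv : h.2 ≠ v) (hev : e.2 ≠ v) :
    (Vcnt (Qh.zip Qh.tail) c (v - 1) + Vcnt (Qh.zip Qh.tail) c v + Hcnt (Qh.zip Qh.tail) c v) % 2 = 0 := by
  match Qh, hh with
  | a :: l, hh =>
  have ha : a = h := by simpa using hh
  subst ha
  simp only [List.tail_cons]
  have hfp := flip_parity (fun q => decide (q.2 = v ∧ c < q.1)) l a e hl
  beta_reduce at hfp
  have hmem := zip_chain_mem _ hc
  set S := (a :: l).zip l with hS
  have hS' : (a :: l).tail = l := rfl
  have hsplit : S.countP (fun s => (decide (s.1.2 = v ∧ c < s.1.1)) != (decide (s.2.2 = v ∧ c < s.2.1)))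
      = Vcnt S c (v-1) + Vcnt S c v + Hcnt S c v := by
    apply countP_split3
    · intro s hs
      obtain ⟨hadj, hm1, hm2⟩ := hmem s (by simpa [hS] using hs)
      have hp := plus_unfold hadj
      simp only [bne_iff_ne, ne_eq, decide_eq_true_eq, decide_eq_decide, Vcnt, Hcnt]
      constructor
      · intro hne
        omega
      · intro hor
        omega
    · intro s hs
      obtain ⟨hadj, hm1, hm2⟩ := hmem s (by simpa [hS] using hs)
      have hp := plus_unfold hadj
      simp only [decide_eq_true_eq]
      omega
    · intro s hs
      obtain ⟨hadj, hm1, hm2⟩ := hmem s (by simpa [hS] using hs)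
      have hp := plus_unfold hadj
      simp only [decide_eq_true_eq]
      omega
    · intro s hs
      obtain ⟨hadj, hm1, hm2⟩ := hmem s (by simpa [hS] using hs)
      have hp := plus_unfold hadj
      simp only [decide_eq_true_eq]
      omega
  have e1 : (decide (a.2 = v ∧ c < a.1) : Bool) = (decide (e.2 = v ∧ c < e.1) : Bool) := by
    simp [hhv, hev]
  rw [e1, if_pos rfl] at hfp
  rw [← hsplit]
  exact hfp

lemma vshift (hc : List.Chain' plusAdj Qh) (c v : ℤ) (w : ℤ × ℤ) (hw : w ∉ Qh)
    (hwform : w = (c + 1, v) ∨ w = (c + 1, v + 1)) :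
    Vcnt (Qh.zip Qh.tail) c v = Vcnt (Qh.zip Qh.tail) (c + 1) v := by
  have hmem := zip_chain_mem _ hc
  apply List.countP_congr
  intro s hs
  obtain ⟨hadj, hm1, hm2⟩ := hmem s hs
  have hp := plus_unfold hadj
  simp only [decide_eq_true_eq]
  constructor
  · intro ⟨h1, h2⟩
    refine ⟨h1, ?_⟩
    rcases eq_or_lt_of_le (show c + 1 ≤ s.1.1 by omega) with heq | hlt
    · -- s.1.1 = c + 1 : both squares of the step are (c+1, v), (c+1, v+1)
      exfalso
      have hv : s.1.1 = c + 1 := by omega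
      have hcol : s.2.1 = s.1.1 := by omega
      have hs1 : s.1 = (s.1.1, s.1.2) := rfl
      have hs2 : s.2 = (s.2.1, s.2.2) := rfl
      rcases hwform with rfl | rfl
      · rcases h1 with ⟨ha1, ha2⟩ | ⟨ha1, ha2⟩
        · exact hw (by rw [show ((c+1 : ℤ), v) = s.1 by rw [hs1]; congr 1 <;> omega]; exact hm1)
        · exact hw (by rw [show ((c+1 : ℤ), v) = s.2 by rw [hs2]; congr 1 <;> omega]; exact hm2)
      · rcases h1 with ⟨ha1, ha2⟩ | ⟨ha1, ha2⟩
        · exact hw (by rw [show ((c+1 : ℤ), v+1) = s.2 by rw [hs2]; congr 1 <;> omega]; exact hm2)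
        · exact hw (by rw [show ((c+1 : ℤ), v+1) = s.1 by rw [hs1]; congr 1 <;> omega]; exact hm1)
    · omega
  · intro ⟨h1, h2⟩
    exact ⟨h1, by omega⟩

lemma hzero (hc : List.Chain' plusAdj Qh) (c v : ℤ) (w : ℤ × ℤ) (hw : w ∉ Qh)
    (hwform : w = (c, v) ∨ w = (c + 1, v)) :
    Hcnt (Qh.zip Qh.tail) c v = 0 := by
  have hmem := zip_chain_mem _ hc
  rw [Hcnt, List.countP_eq_zero]
  intro s hs
  obtain ⟨hadj, hm1, hm2⟩ := hmem s hs
  simp only [decide_eq_true_eq]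
  intro ⟨h1, h2, h3⟩
  have hs1 : s.1 = (s.1.1, s.1.2) := rfl
  have hs2 : s.2 = (s.2.1, s.2.2) := rfl
  rcases hwform with rfl | rfl <;> rcases h3 with ⟨g1, g2⟩ | ⟨g1, g2⟩
  · exact hw (by rw [show ((c : ℤ), v) = s.1 by rw [hs1]; congr 1 <;> omega]; exact hm1)
  · exact hw (by rw [show ((c : ℤ), v) = s.2 by rw [hs2]; congr 1 <;> omega]; exact hm2)
  · exact hw (by rw [show ((c+1 : ℤ), v) = s.2 by rw [hs2]; congr 1 <;> omega]; exact hm2)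
  · exact hw (by rw [show ((c+1 : ℤ), v) = s.1 by rw [hs1]; congr 1 <;> omega]; exact hm1)

lemma vzero (c v : ℤ) (hcols : ∀ x ∈ Qh, x.1 ≤ c) :
    Vcnt (Qh.zip Qh.tail) c v = 0 := by
  rw [Vcnt, List.countP_eq_zero]
  intro s hs
  have hm1 : s.1 ∈ Qh := by
    have := List.of_mem_zip hs
    exact this.1
  simp only [decide_eq_true_eq]
  intro ⟨h1, h2⟩
  have := hcols s.1 hm1
  omega

end Parity

section NoBoth

lemma no_both (m n : ℤ) (hm : 1 ≤ m) (hn : 1 ≤ n) (ω : ℤ × ℤ → Bool)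
    (hA : ∃ J : List (ℤ × ℤ), IsLRCrossing starAdj m n J ∧ ∀ k ∈ J, ω k = true)
    (hB : ∃ J : List (ℤ × ℤ), IsTDCrossing plusAdj m n J ∧ ∀ k ∈ J, ω k = false) : False := by
  obtain ⟨P, ⟨hPne, hPnd, hPc, hPrect, hPhead, hPlast⟩, hPocc⟩ := hA
  obtain ⟨Q, ⟨hQne, hQnd, hQc, hQrect, hQhead, hQlast⟩, hQvac⟩ := hB
  obtain ⟨q₀, Q', rfl⟩ := List.exists_cons_of_ne_nil hQne
  have hq0n : q₀.2 = n := (hQhead q₀ (by simp)).mpr rfl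
  obtain ⟨ql, hql⟩ := Option.isSome_iff_exists.mp (List.getLast?_isSome.mpr hQne)
  have hqlmem : ql ∈ q₀ :: Q' := List.mem_of_mem_getLast? (hql ▸ rfl)
  have hql1 : ql.2 = 1 := (hQlast ql hqlmem).mpr hql
  obtain ⟨p₀, P', rfl⟩ := List.exists_cons_of_ne_nil hPne
  have hp01 : p₀.1 = 1 := (hPhead p₀ (by simp)).mpr rfl
  obtain ⟨pl, hpl⟩ := Option.isSome_iff_exists.mp (List.getLast?_isSome.mpr hPne)
  have hplmem : pl ∈ p₀ :: P' := List.mem_of_mem_getLast? (hpl ▸ rfl)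
  have hplm : pl.1 = m := (hPlast pl hplmem).mpr hpl
  set Q := q₀ :: Q' with hQdef
  set P := p₀ :: P' with hPdef
  set Qh : List (ℤ × ℤ) := (q₀.1, n + 2) :: (q₀.1, n + 1) :: (Q ++ [(ql.1, 0)]) with hQh
  have hQhHead : Qh.head? = some (q₀.1, n + 2) := rfl
  have hQhLast : Qh.getLast? = some (ql.1, 0) := by
    rw [hQh, List.getLast?_cons_cons]
    have : (Q ++ [(ql.1, 0)]).getLast? = some (ql.1, 0) := by
      rw [List.getLast?_append]; simp
    rw [hQdef] at this ⊢
    rw [show ((q₀.1, n+1) :: (q₀ :: Q' ++ [(ql.1, 0)])).getLast?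
        = (q₀ :: Q' ++ [(ql.1, 0)]).getLast? from getLast?_cons_ne (by simp), this]
  have hchain : List.Chain' plusAdj Qh := by
    rw [hQh, hQdef]
    rw [show ((q₀.1, n+2) :: (q₀.1, n+1) :: (q₀ :: Q' ++ [(ql.1, 0)]))
        = (q₀.1, n+2) :: (q₀.1, n+1) :: q₀ :: (Q' ++ [(ql.1, 0)]) from by simp]
    rw [List.chain'_cons, List.chain'_cons]
    refine ⟨by simp [plusAdj], by simp [plusAdj, hq0n], ?_⟩
    rw [show (q₀ :: (Q' ++ [(ql.1, 0)])) = (q₀ :: Q') ++ [(ql.1, 0)] from by simp]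
    rw [List.chain'_append]
    refine ⟨by rw [← hQdef]; exact hQc, by simp, ?_⟩
    intro x hx y hy
    rw [← hQdef] at hx
    rw [hql] at hx
    simp at hx hy
    subst hx; subst hy
    simp [plusAdj, hql1]
  have hcols : ∀ x ∈ Qh, 1 ≤ x.1 ∧ x.1 ≤ m := by
    intro x hx
    rw [hQh] at hx
    simp only [List.mem_cons, List.mem_append, List.mem_singleton, List.mem_nil_iff, or_false] at hx
    have hq₀r := hQrect q₀ (by rw [hQdef]; exact List.mem_cons_self)
    have hqlr := hQrect ql hqlmem
    rcases hx with rfl | rfl | hx | rfl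
    · exact ⟨hq₀r.1, hq₀r.2.1⟩
    · exact ⟨hq₀r.1, hq₀r.2.1⟩
    · exact ⟨(hQrect x hx).1, (hQrect x hx).2.1⟩
    · exact ⟨hqlr.1, hqlr.2.1⟩
  have hnotin : ∀ x : ℤ × ℤ, inRect m n x → ω x = true → x ∉ Qh := by
    intro x hrect hocc hx
    rw [hQh] at hx
    simp only [List.mem_cons, List.mem_append, List.mem_singleton, List.mem_nil_iff, or_false] at hx
    obtain ⟨_, _, hx3, hx4⟩ := hrect
    rcases hx with rfl | rfl | hx | rfl
    · exact absurd hx4 (by show ¬(n + 2 ≤ n); omega)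
    · exact absurd hx4 (by show ¬(n + 1 ≤ n); omega)
    · rw [hQvac x hx] at hocc; exact Bool.false_ne_true hocc
    · exact absurd hx3 (by show ¬((1:ℤ) ≤ 0); omega)
  -- core parity step for the four positive offsets
  have core : ∀ x y : ℤ × ℤ, inRect m n x → inRect m n y → x ∉ Qh → y ∉ Qh →
      ((y.1 = x.1 + 1 ∧ y.2 = x.2) ∨ (y.1 = x.1 ∧ y.2 = x.2 + 1) ∨
       (y.1 = x.1 + 1 ∧ y.2 = x.2 + 1) ∨ (y.1 = x.1 + 1 ∧ y.2 = x.2 - 1)) →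
      Vcnt (Qh.zip Qh.tail) x.1 x.2 % 2 = Vcnt (Qh.zip Qh.tail) y.1 y.2 % 2 := by
    intro x y hx hy hxQ hyQ hcase
    obtain ⟨hx1, hx2, hx3, hx4⟩ := hx
    obtain ⟨hy1, hy2, hy3, hy4⟩ := hy
    rcases hcase with ⟨h1, h2⟩ | ⟨h1, h2⟩ | ⟨h1, h2⟩ | ⟨h1, h2⟩
    · rw [h1, h2]
      rw [vshift hchain x.1 x.2 y hyQ (Or.inl (Prod.ext_iff.mpr ⟨h1, h2⟩))]
    · rw [h1, h2]
      have hrf := region_flip hchain hQhHead hQhLast x.1 (x.2 + 1)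
        (by simp; omega) (by simp; omega)
      rw [show x.2 + 1 - 1 = x.2 from by ring] at hrf
      have hz := hzero hchain x.1 (x.2 + 1) y hyQ (Or.inl (Prod.ext_iff.mpr ⟨h1, h2⟩))
      omega
    · have hrf := region_flip hchain hQhHead hQhLast (x.1 + 1) (x.2 + 1)
        (by simp; omega) (by simp; omega)
      rw [show x.2 + 1 - 1 = x.2 from by ring] at hrf
      have hz := hzero hchain (x.1 + 1) (x.2 + 1) y hyQ
        (Or.inl (Prod.ext_iff.mpr ⟨h1, h2⟩))
      have hsh := vshift hchain x.1 x.2 y hyQ (Or.inr (Prod.ext_iff.mpr ⟨h1, h2⟩))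
      rw [h1, h2]
      omega
    · have hrf := region_flip hchain hQhHead hQhLast x.1 x.2
        (by simp; omega) (by simp; omega)
      have hz := hzero hchain x.1 x.2 x hxQ (Or.inl Prod.mk.eta.symm)
      have hsh := vshift hchain x.1 (x.2 - 1) y hyQ
        (Or.inl (Prod.ext_iff.mpr ⟨h1, by omega⟩))
      rw [h1, h2]
      omega
  have nstep : ∀ x y : ℤ × ℤ, inRect m n x → inRect m n y → x ∉ Qh → y ∉ Qh →
      starAdj x y → Vcnt (Qh.zip Qh.tail) x.1 x.2 % 2 = Vcnt (Qh.zip Qh.tail) y.1 y.2 % 2 := by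
    intro x y hx hy hxQ hyQ hadj
    obtain ⟨b1, b2, b3, b4, b5⟩ := star_bounds hadj
    have hcases : ((y.1 = x.1 + 1 ∧ y.2 = x.2) ∨ (y.1 = x.1 ∧ y.2 = x.2 + 1) ∨
       (y.1 = x.1 + 1 ∧ y.2 = x.2 + 1) ∨ (y.1 = x.1 + 1 ∧ y.2 = x.2 - 1)) ∨
      ((x.1 = y.1 + 1 ∧ x.2 = y.2) ∨ (x.1 = y.1 ∧ x.2 = y.2 + 1) ∨
       (x.1 = y.1 + 1 ∧ x.2 = y.2 + 1) ∨ (x.1 = y.1 + 1 ∧ x.2 = y.2 - 1)) := by omega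
    rcases hcases with h | h
    · exact core x y ⟨hx.1, hx.2.1, hx.2.2.1, hx.2.2.2⟩ ⟨hy.1, hy.2.1, hy.2.2.1, hy.2.2.2⟩ hxQ hyQ h
    · exact (core y x ⟨hy.1, hy.2.1, hy.2.2.1, hy.2.2.2⟩ ⟨hx.1, hx.2.1, hx.2.2.1, hx.2.2.2⟩ hyQ hxQ h).symm
  -- parity is constant along P
  have hconst := chain_const P hPc
    (fun a b ha hb hab => nstep a b (hPrect a ha) (hPrect b hb)
      (hnotin a (hPrect a ha) (hPocc a ha)) (hnotin b (hPrect b hb) (hPocc b hb)) hab)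
    p₀ (by simp [hPdef]) pl hplmem
  -- head parity is odd
  have hp₀rect := hPrect p₀ (by simp [hPdef])
  obtain ⟨hpr1, hpr2, hpr3, hpr4⟩ := hp₀rect
  have hodd : Vcnt (Qh.zip Qh.tail) p₀.1 p₀.2 % 2 = 1 := by
    have hv := vtot hchain hQhHead hQhLast p₀.2 (by simp; omega) (by simp; omega)
      (fun x hx => (hcols x hx).1)
    have hsh := vshift hchain 0 p₀.2 p₀
      (hnotin p₀ ⟨hpr1, hpr2, hpr3, hpr4⟩ (hPocc p₀ (by simp [hPdef])))
      (Or.inl (Prod.ext_iff.mpr ⟨by omega, rfl⟩))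
    rw [show (0 : ℤ) + 1 = 1 from by ring] at hsh
    rw [hp01, ← hsh, hv]
  -- last parity is even
  have heven : Vcnt (Qh.zip Qh.tail) pl.1 pl.2 % 2 = 0 := by
    rw [hplm, vzero m pl.2 (fun x hx => (hcols x hx).2)]
  rw [hconst, heven] at hodd
  exact absurd hodd zero_ne_one
end NoBoth

section Walk

inductive Dir | N | S | E | W deriving DecidableEq

instance : Fintype Dir :=
  ⟨⟨{Dir.N, Dir.S, Dir.E, Dir.W}, by decide⟩, fun x => by cases x <;> decide⟩

abbrev St := (ℤ × ℤ) × Dir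

def fwd : St → ℤ × ℤ
  | ((x, y), Dir.N) => (x, y + 1)
  | ((x, y), Dir.S) => (x, y - 1)
  | ((x, y), Dir.E) => (x + 1, y)
  | ((x, y), Dir.W) => (x - 1, y)

def lcell : St → ℤ × ℤ
  | ((x, y), Dir.N) => (x, y + 1)
  | ((x, y), Dir.S) => (x + 1, y)
  | ((x, y), Dir.E) => (x + 1, y + 1)
  | ((x, y), Dir.W) => (x, y)

def rcell : St → ℤ × ℤ
  | ((x, y), Dir.N) => (x + 1, y + 1)
  | ((x, y), Dir.S) => (x, y)
  | ((x, y), Dir.E) => (x + 1, y)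
  | ((x, y), Dir.W) => (x, y + 1)

def leftD : Dir → Dir | Dir.N => Dir.W | Dir.W => Dir.S | Dir.S => Dir.E | Dir.E => Dir.N
def rightD : Dir → Dir | Dir.N => Dir.E | Dir.E => Dir.S | Dir.S => Dir.W | Dir.W => Dir.N

def stepW (g : ℤ × ℤ → Bool) (s : St) : St :=
  if g (lcell (fwd s, s.2)) then (fwd s, leftD s.2)
  else if g (rcell (fwd s, s.2)) then (fwd s, s.2) else (fwd s, rightD s.2)

def GoodW (g : ℤ × ℤ → Bool) (s : St) : Prop :=
  g (lcell s) = false ∧ g (rcell s) = true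

/-- the mid cell used on right turns -/
def midc (s : St) : ℤ × ℤ := lcell (fwd s, s.2)

lemma step_cases (g : ℤ × ℤ → Bool) (s : St) (hs : GoodW g s) :
    GoodW g (stepW g s) ∧
    (rcell (stepW g s) = rcell s ∨ starAdj (rcell s) (rcell (stepW g s))) ∧
    ((lcell (stepW g s) = lcell s ∨ plusAdj (lcell s) (lcell (stepW g s))) ∨
      (plusAdj (lcell s) (midc s) ∧ plusAdj (midc s) (lcell (stepW g s)) ∧
        g (midc s) = false)) := by
  obtain ⟨hl, hr⟩ := hs
  obtain ⟨⟨x, y⟩, d⟩ := s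
  cases d <;>
    · simp only [stepW] at *
      split_ifs with h1 h2 <;>
        simp only [fwd, lcell, rcell, leftD, rightD, midc] at * <;>
        refine ⟨⟨?_, ?_⟩, ?_, ?_⟩ <;>
          simp_all [starAdj, plusAdj, lcell, rcell, abs] <;> omega

lemma gtf {g : ℤ × ℤ → Bool} {a b c d : ℤ} (h1 : g (a, b) = true) (h2 : g (c, d) = false)
    (hac : a = c) (hbd : b = d) : False := by subst hac; subst hbd; rw [h1] at h2; exact absurd h2 (by decide)

lemma gtn {g : ℤ × ℤ → Bool} {a b c d : ℤ} (h1 : g (a, b) = true) (h2 : ¬ g (c, d) = true)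
    (hac : a = c) (hbd : b = d) : False := by subst hac; subst hbd; exact h2 h1

lemma step_inj (g : ℤ × ℤ → Bool) {s s' : St} (hs : GoodW g s) (hs' : GoodW g s')
    (h : stepW g s = stepW g s') : s = s' := by
  obtain ⟨hl, hr⟩ := hs; obtain ⟨hl', hr'⟩ := hs'
  obtain ⟨⟨x, y⟩, d⟩ := s; obtain ⟨⟨x', y'⟩, d'⟩ := s'
  cases d <;> cases d' <;>
    · simp only [stepW] at h
      split_ifs at h with c1 c2 c3 c4 c5 c6 c7 c8 <;>
        simp only [fwd, lcell, rcell, leftD, rightD] at * <;>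
        simp only [Prod.mk.injEq, eq_self_iff_true, and_true, reduceCtorEq, and_false] at h ⊢ <;>
        (try obtain ⟨e1, e2⟩ := h) <;>
        first
          | exact ⟨by omega, by omega⟩
          | (exfalso
             first
               | exact gtf hr hl' (by omega) (by omega)
               | exact gtf hr' hl (by omega) (by omega)
               | exact gtf c1 hl (by omega) (by omega)
               | exact gtf c1 hl' (by omega) (by omega)
               | exact gtf c2 hl (by omega) (by omega)
               | exact gtf c2 hl' (by omega) (by omega)
               | exact gtf c3 hl (by omega) (by omega)
               | exact gtf c3 hl' (by omega) (by omega)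
               | exact gtf c4 hl (by omega) (by omega)
               | exact gtf c4 hl' (by omega) (by omega)
               | exact gtn hr c1 (by omega) (by omega)
               | exact gtn hr' c1 (by omega) (by omega)
               | exact gtn hr c2 (by omega) (by omega)
               | exact gtn hr' c2 (by omega) (by omega)
               | exact gtn hr c3 (by omega) (by omega)
               | exact gtn hr' c3 (by omega) (by omega)
               | exact gtn hr c4 (by omega) (by omega)
               | exact gtn hr' c4 (by omega) (by omega)
               | exact gtn c1 c2 (by omega) (by omega)
               | exact gtn c1 c3 (by omega) (by omega)
               | exact gtn c1 c4 (by omega) (by omega)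
               | exact gtn c2 c3 (by omega) (by omega)
               | exact gtn c2 c4 (by omega) (by omega)
               | exact gtn c3 c4 (by omega) (by omega)
               | exact gtf hr c1 (by omega) (by omega)
               | exact gtf hr c2 (by omega) (by omega)
               | exact gtf hr c3 (by omega) (by omega)
               | exact gtf hr c4 (by omega) (by omega)
               | exact gtf hr c5 (by omega) (by omega)
               | exact gtf hr c6 (by omega) (by omega)
               | exact gtf hr' c1 (by omega) (by omega)
               | exact gtf hr' c2 (by omega) (by omega)
               | exact gtf hr' c3 (by omega) (by omega)
               | exact gtf hr' c4 (by omega) (by omega)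
               | exact gtf hr' c5 (by omega) (by omega)
               | exact gtf hr' c6 (by omega) (by omega)
               | exact gtf c1 c2 (by omega) (by omega)
               | exact gtf c1 c3 (by omega) (by omega)
               | exact gtf c2 c3 (by omega) (by omega)
               | exact gtf c3 c2 (by omega) (by omega)
               | exact gtf c2 c1 (by omega) (by omega)
               | exact gtf c3 c1 (by omega) (by omega)
               | exact gtf c5 hl (by omega) (by omega)
               | exact gtf c5 hl' (by omega) (by omega)
               | exact gtf c6 hl (by omega) (by omega)
               | exact gtf c6 hl' (by omega) (by omega)
               | exact gtf c3 c6 (by omega) (by omega)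
               | exact gtf c3 c5 (by omega) (by omega)
               | exact gtf c1 c6 (by omega) (by omega)
               | exact gtf c1 c5 (by omega) (by omega))

end Walk

section Traj
variable (m n : ℤ) (ω : ℤ × ℤ → Bool)

def extC (x : ℤ × ℤ) : Bool :=
  if x.1 ≤ 0 then true
  else if x.1 ≤ m ∧ 1 ≤ x.2 ∧ x.2 ≤ n then ω x else false

lemma occ_iff (x : ℤ × ℤ) : extC m n ω x = true ↔ x.1 ≤ 0 ∨ (inRect m n x ∧ ω x = true) := by
  unfold extC inRect
  split_ifs with h1 h2
  · simp [h1]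
  · constructor
    · intro hw; exact Or.inr ⟨⟨by omega, h2.1, h2.2.1, h2.2.2⟩, hw⟩
    · rintro (hc | ⟨_, hw⟩)
      · exact absurd hc h1
      · exact hw
  · constructor
    · intro hw; exact absurd hw (by simp)
    · rintro (hc | ⟨⟨g1, g2, g3, g4⟩, hw⟩)
      · exact absurd hc h1
      · exact absurd ⟨g2, g3, g4⟩ h2

lemma vac_iff (x : ℤ × ℤ) : extC m n ω x = false ↔ (1 ≤ x.1 ∧ (inRect m n x → ω x = false)) := by
  have h := occ_iff m n ω x
  constructor
  · intro hv
    rw [← Bool.not_eq_true, h] at hv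
    push_neg at hv
    refine ⟨by omega, fun hr => ?_⟩
    rcases hv with ⟨h1, h2⟩
    simpa using h2 hr
  · intro ⟨h1, h2⟩
    rw [← Bool.not_eq_true, h]
    push_neg
    refine ⟨by omega, fun hr => by simp [h2 hr]⟩

def uray (j : ℕ) : St := ((0, n + 1 + j), Dir.S)

def trajW (t : ℕ) : St := (stepW (extC m n ω))^[t] ((0, n + 1), Dir.S)

lemma traj_zero : trajW m n ω 0 = uray n 0 := by simp [trajW, uray]

lemma good_uray (j : ℕ) : GoodW (extC m n ω) (uray n j) := by
  constructor
  · rw [show lcell (uray n j) = (1, n + 1 + j) from rfl, vac_iff]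
    exact ⟨le_refl _, fun hr => absurd hr.2.2.2 (by push_cast; omega)⟩
  · rw [show rcell (uray n j) = (0, n + 1 + j) from rfl, occ_iff]
    exact Or.inl (by norm_num)

lemma step_uray (j : ℕ) : stepW (extC m n ω) (uray n (j + 1)) = uray n j := by
  have hq : fwd (uray n (j + 1)) = (0, n + 1 + j) := by
    have harith : n + 1 + ((j + 1 : ℕ) : ℤ) - 1 = n + 1 + (j : ℕ) := by push_cast; ring
    rw [show fwd (uray n (j + 1)) = (0, n + 1 + ((j + 1 : ℕ) : ℤ) - 1) from rfl, harith]
  have hl : extC m n ω (lcell ((0, n + 1 + (j:ℤ)), Dir.S)) = false := by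
    rw [show lcell ((0, n + 1 + (j:ℤ)), Dir.S) = (1, n + 1 + j) from rfl, vac_iff]
    exact ⟨le_refl _, fun hr => absurd hr.2.2.2 (by push_cast; omega)⟩
  have hr : extC m n ω (rcell ((0, n + 1 + (j:ℤ)), Dir.S)) = true := by
    rw [show rcell ((0, n + 1 + (j:ℤ)), Dir.S) = (0, n + 1 + j) from rfl, occ_iff]
    exact Or.inl (by norm_num)
  rw [stepW, show (uray n (j+1)).2 = Dir.S from rfl, hq]
  rw [hl]
  simp only [Bool.false_eq_true, if_false]
  rw [hr]
  simp [uray]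

lemma traj_succ (t : ℕ) : trajW m n ω (t + 1) = stepW (extC m n ω) (trajW m n ω t) := by
  rw [trajW, Function.iterate_succ_apply', ← trajW]

lemma traj_good (t : ℕ) : GoodW (extC m n ω) (trajW m n ω t) := by
  induction t with
  | zero => rw [traj_zero]; exact good_uray m n ω 0
  | succ t ih =>
    rw [traj_succ]
    exact (step_cases (extC m n ω) _ ih).1

lemma traj_ne_ray (t j : ℕ) : trajW m n ω t ≠ uray n (j + 1) := by
  induction t generalizing j with
  | zero =>
    rw [traj_zero]
    intro h
    have := congrArg (fun s : St => s.1.2) h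
    simp [uray] at this
    omega
  | succ t ih =>
    intro h
    rw [traj_succ] at h
    rw [← step_uray m n ω (j + 1)] at h
    exact ih (j + 1) (step_inj _ (traj_good m n ω t) (good_uray m n ω (j + 2)) h)

lemma traj_back (i j : ℕ) (h : trajW m n ω (i + 1) = trajW m n ω (j + 1)) :
    trajW m n ω i = trajW m n ω j := by
  rw [traj_succ, traj_succ] at h
  exact step_inj _ (traj_good m n ω i) (traj_good m n ω j) h

lemma traj_injective : Function.Injective (trajW m n ω) := by
  have key : ∀ i k : ℕ, trajW m n ω i = trajW m n ω (i + k) → k = 0 := by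
    intro i
    induction i with
    | zero =>
      intro k h
      rcases k with _ | k'
      · rfl
      · exfalso
        rw [traj_zero] at h
        rw [show (0 : ℕ) + (k' + 1) = k' + 1 from by omega, traj_succ] at h
        rw [← step_uray m n ω 0] at h
        exact traj_ne_ray m n ω k' 0
          (step_inj _ (traj_good m n ω k') (good_uray m n ω 1) h.symm)
    | succ i ih =>
      intro k h
      rw [show i + 1 + k = (i + k) + 1 from by omega] at h
      exact ih k (traj_back m n ω i (i + k) h)
  intro i j h
  rcases le_total i j with hle | hle
  · have := key i (j - i) (by rw [show i + (j - i) = j from by omega]; exact h)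
    omega
  · have := key j (i - j) (by rw [show j + (i - j) = i from by omega]; exact h.symm)
    omega

def stopP (s : St) : Prop := m ≤ (rcell s).1 ∨ (lcell s).2 ≤ 0

lemma exists_stop (hm : 1 ≤ m) (hn : 1 ≤ n) : ∃ t : ℕ, stopP m (trajW m n ω t) := by
  by_contra hno
  push_neg at hno
  have hbound : ∀ t : ℕ, trajW m n ω t ∈
      ((Finset.Icc (0:ℤ) m ×ˢ Finset.Icc (0:ℤ) (n+1)) ×ˢ (Finset.univ : Finset Dir)) := by
    intro t
    have hg := traj_good m n ω t
    have hs := hno t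
    obtain ⟨hl, hr⟩ := hg
    have hlv := (vac_iff m n ω _).mp hl
    have hro := (occ_iff m n ω _).mp hr
    rw [stopP] at hs
    push_neg at hs
    obtain ⟨hs1, hs2⟩ := hs
    rcases hE : trajW m n ω t with ⟨⟨x, y⟩, d⟩
    rw [hE] at hlv hro hs1 hs2
    simp only [Finset.mem_product, Finset.mem_Icc, Finset.mem_univ, and_true]
    refine ⟨⟨?_, ?_⟩, ?_, ?_⟩ <;>
    · cases d
      · -- N
        rw [show lcell ((x, y), Dir.N) = (x, y + 1) from rfl] at hlv hs2
        rw [show rcell ((x, y), Dir.N) = (x + 1, y + 1) from rfl] at hro hs1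
        have e1 : 1 ≤ x := hlv.1
        have e2 : x + 1 < m := hs1
        rcases hro with hc | ⟨⟨g1, g2, g3, g4⟩, -⟩
        · have hc' : x + 1 ≤ 0 := hc
          omega
        · have g2' : x + 1 ≤ m := g2
          have g3' : 1 ≤ y + 1 := g3
          have g4' : y + 1 ≤ n := g4
          omega
      · -- S
        rw [show lcell ((x, y), Dir.S) = (x + 1, y) from rfl] at hlv hs2
        rw [show rcell ((x, y), Dir.S) = (x, y) from rfl] at hro hs1
        have e1 : 1 ≤ x + 1 := hlv.1
        have e2 : x < m := hs1
        have e3 : 0 < y := hs2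
        have hyub : y ≤ n + 1 := by
          by_contra hy
          push_neg at hy
          refine traj_ne_ray m n ω t (y - n - 2).toNat ?_
          rw [hE, uray]
          have hcast : ((y - n - 2).toNat : ℤ) = y - n - 2 := Int.toNat_of_nonneg (by omega)
          have hx0 : x = 0 := by
            rcases hro with hc | ⟨⟨g1, g2, g3, g4⟩, -⟩
            · have hc' : x ≤ 0 := hc
              omega
            · have g4' : y ≤ n := g4
              omega
          push_cast [hcast]
          rw [hx0]
          congr 2
          omega
        rcases hro with hc | ⟨⟨g1, g2, g3, g4⟩, -⟩
        · have hc' : x ≤ 0 := hc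
          omega
        · have g2' : x ≤ m := g2
          omega
      · -- E
        rw [show lcell ((x, y), Dir.E) = (x + 1, y + 1) from rfl] at hlv hs2
        rw [show rcell ((x, y), Dir.E) = (x + 1, y) from rfl] at hro hs1
        have e1 : 1 ≤ x + 1 := hlv.1
        have e2 : x + 1 < m := hs1
        rcases hro with hc | ⟨⟨g1, g2, g3, g4⟩, -⟩
        · have hc' : x + 1 ≤ 0 := hc
          omega
        · have g2' : x + 1 ≤ m := g2
          have g3' : 1 ≤ y := g3
          have g4' : y ≤ n := g4
          omega
      · -- W
        rw [show lcell ((x, y), Dir.W) = (x, y) from rfl] at hlv hs2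
        rw [show rcell ((x, y), Dir.W) = (x, y + 1) from rfl] at hro hs1
        have e1 : 1 ≤ x := hlv.1
        have e2 : x < m := hs1
        have e3 : 0 < y := hs2
        rcases hro with hc | ⟨⟨g1, g2, g3, g4⟩, -⟩
        · have hc' : x ≤ 0 := hc
          omega
        · have g2' : x ≤ m := g2
          have g4' : y + 1 ≤ n := g4
          omega
  exact absurd
    (Set.infinite_of_injective_forall_mem (traj_injective m n ω)
      (fun t => Finset.mem_coe.mpr (hbound t)))
    (Set.not_infinite.mpr ((Finset.finite_toSet _)))
end Traj

section Existence

lemma step_cases2 (g : ℤ × ℤ → Bool) (s : St) (hs : GoodW g s) :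
    ((stepW g s).2 = rightD s.2 →
      (plusAdj (lcell s) (midc s) ∧ plusAdj (midc s) (lcell (stepW g s)) ∧
        g (midc s) = false)) ∧
    ((stepW g s).2 ≠ rightD s.2 →
      (lcell (stepW g s) = lcell s ∨ plusAdj (lcell s) (lcell (stepW g s)))) := by
  obtain ⟨hl, hr⟩ := hs
  obtain ⟨⟨x, y⟩, d⟩ := s
  cases d <;>
    · simp only [stepW] at *
      split_ifs with h1 h2 <;>
        simp only [fwd, lcell, rcell, leftD, rightD, midc] at * <;>
        constructor <;> intro hd <;>
          simp_all [plusAdj, lcell, abs] <;> omega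

lemma col_facts (s : St) : (lcell s).1 ≤ (rcell s).1 + 1 ∧ (midc s).1 ≤ (rcell s).1 + 1 := by
  obtain ⟨⟨x, y⟩, d⟩ := s
  cases d <;> simp [lcell, rcell, midc, fwd] <;> omega

variable (m n : ℤ) (ω : ℤ × ℤ → Bool)

def vacL : ℕ → List (ℤ × ℤ)
  | 0 => [lcell (trajW m n ω 0)]
  | (t+1) => vacL t ++
      ((if (trajW m n ω (t+1)).2 = rightD ((trajW m n ω t).2) then [midc (trajW m n ω t)] else [])
        ++ [lcell (trajW m n ω (t+1))])

lemma vac_main (t : ℕ) (hR : ∀ i, i ≤ t → (rcell (trajW m n ω i)).1 ≤ m - 1) :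
    (vacL m n ω t).head? = some (lcell (trajW m n ω 0)) ∧
    (vacL m n ω t).getLast? = some (lcell (trajW m n ω t)) ∧
    List.Chain' (fun a b => a = b ∨ plusAdj a b) (vacL m n ω t) ∧
    (∀ x ∈ vacL m n ω t, extC m n ω x = false ∧ x.1 ≤ m) := by
  induction t with
  | zero =>
    refine ⟨rfl, rfl, by simp [vacL], ?_⟩
    intro x hx
    simp only [vacL, List.mem_singleton] at hx
    subst hx
    refine ⟨(traj_good m n ω 0).1, ?_⟩
    have := (col_facts (trajW m n ω 0)).1
    have h2 := hR 0 (by omega)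
    omega
  | succ t ih =>
    obtain ⟨ih1, ih2, ih3, ih4⟩ := ih (fun i hi => hR i (by omega))
    have hg := traj_good m n ω t
    have hsc := step_cases2 (extC m n ω) (trajW m n ω t) hg
    have hgs := (step_cases (extC m n ω) (trajW m n ω t) hg).1
    rw [← traj_succ] at hsc hgs
    have hRt := hR t (by omega)
    have hRt1 := hR (t+1) (by omega)
    have hcf := col_facts (trajW m n ω t)
    have hcf1 := col_facts (trajW m n ω (t+1))
    by_cases hd : (trajW m n ω (t+1)).2 = rightD ((trajW m n ω t).2)
    · obtain ⟨hp1, hp2, hp3⟩ := hsc.1 hd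
      refine ⟨?_, ?_, ?_, ?_⟩
      · rw [vacL, List.head?_append, ih1]; rfl
      · rw [vacL, List.getLast?_append]; simp [hd]
      · rw [vacL, List.chain'_append]
        refine ⟨ih3, ?_, ?_⟩
        · simp only [hd, if_pos rfl]
          exact List.chain'_pair.mpr (Or.inr hp2)
        · intro a ha b hb
          rw [ih2] at ha
          simp only [hd, if_pos rfl] at hb
          simp at ha hb
          subst ha; subst hb
          exact Or.inr hp1
      · intro x hx
        rw [vacL] at hx
        simp only [hd, if_pos rfl, List.mem_append, List.mem_singleton, List.mem_cons] at hx
        rcases hx with hx | hx | hx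
        · exact ih4 x hx
        · simp at hx; subst hx
          exact ⟨hp3, by omega⟩
        · simp at hx; subst hx
          exact ⟨(traj_good m n ω (t+1)).1, by omega⟩
    · have hlp := hsc.2 hd
      refine ⟨?_, ?_, ?_, ?_⟩
      · rw [vacL, List.head?_append, ih1]; rfl
      · rw [vacL, List.getLast?_append]; simp [hd]
      · rw [vacL, List.chain'_append]
        refine ⟨ih3, ?_, ?_⟩
        · simp [hd]
        · intro a ha b hb
          rw [ih2] at ha
          simp only [hd, if_neg hd] at hb
          simp at ha hb
          subst ha; subst hb
          rcases hlp with h | h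
          · exact Or.inl h.symm
          · exact Or.inr h
      · intro x hx
        rw [vacL] at hx
        simp only [hd, if_neg hd, List.mem_append, List.mem_singleton, List.nil_append,
          List.mem_cons] at hx
        rcases hx with hx | hx
        · exact ih4 x hx
        · simp at hx; subst hx
          exact ⟨(traj_good m n ω (t+1)).1, by omega⟩

lemma exists_crossing (hm : 1 ≤ m) (hn : 1 ≤ n) :
    (∃ J : List (ℤ × ℤ), IsLRCrossing starAdj m n J ∧ ∀ k ∈ J, ω k = true) ∨
    (∃ J : List (ℤ × ℤ), IsTDCrossing plusAdj m n J ∧ ∀ k ∈ J, ω k = false) := by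
  classical
  set t₀ := Nat.find (exists_stop m n ω hm hn) with ht₀
  have hstop : stopP m (trajW m n ω t₀) := Nat.find_spec (exists_stop m n ω hm hn)
  have hmin : ∀ i, i < t₀ → ¬ stopP m (trajW m n ω i) :=
    fun i hi => Nat.find_min (exists_stop m n ω hm hn) hi
  by_cases hcase : m ≤ (rcell (trajW m n ω t₀)).1
  · -- occupied LR crossing
    left
    set occL : List (ℤ × ℤ) := (List.range (t₀+1)).map (fun i => rcell (trajW m n ω i)) with hoccL
    have hne : occL ≠ [] := by simp [hoccL]
    have hchain : List.Chain' (fun a b => a = b ∨ starAdj a b) occL := by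
      rw [hoccL, List.chain'_map, List.chain'_range_succ]
      intro i _
      have := (step_cases (extC m n ω) (trajW m n ω i) (traj_good m n ω i)).2.1
      rw [← traj_succ] at this
      rcases this with h | h
      · exact Or.inl h.symm
      · exact Or.inr h
    have hhead : occL.head? = some ((0 : ℤ), n + 1) := by
      rw [hoccL]
      rw [show List.range (t₀+1) = 0 :: (List.range t₀).map Nat.succ from List.range_succ_eq_map (n := t₀)]
      rfl
    have hlast : occL.getLast? = some (rcell (trajW m n ω t₀)) := by
      rw [hoccL, List.range_succ, List.map_append, List.getLast?_append]
      rfl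
    obtain ⟨J, hJne, hJnd, hJc, hJP, hJ1, hJM⟩ := extract_crossing (α := ℤ × ℤ)
      (adj := starAdj) (P := fun x => inRect m n x ∧ ω x = true)
      (pre := fun x => extC m n ω x = true) (fun k => k.1) m hm
      (fun a b h => by
        have := star_bounds h
        show |a.1 - b.1| ≤ 1
        rw [abs_le]; omega)
      (fun x hx h1 h2 => by
        have h1' : 1 ≤ x.1 := h1
        rcases (occ_iff m n ω x).mp hx with hc | hc
        · omega
        · exact hc)
      occL hne hchain
      (fun x hx => by
        rw [hoccL] at hx
        simp only [List.mem_map] at hx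
        obtain ⟨i, _, rfl⟩ := hx
        exact (traj_good m n ω i).2)
      (fun x hx => by rw [hhead] at hx; simp at hx; subst hx; simp)
      (fun x hx => by rw [hlast] at hx; simp at hx; subst hx; exact hcase)
    exact ⟨J, ⟨hJne, hJnd, hJc, fun k hk => (hJP k hk).1, hJ1, hJM⟩, fun k hk => (hJP k hk).2⟩
  · -- vacant TD crossing
    right
    have hRall : ∀ i, i ≤ t₀ → (rcell (trajW m n ω i)).1 ≤ m - 1 := by
      intro i hi
      rcases Nat.lt_or_ge i t₀ with hlt | hge
      · have := hmin i hlt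
        rw [stopP] at this
        push_neg at this
        omega
      · have : i = t₀ := by omega
        subst this
        omega
    have hLend : (lcell (trajW m n ω t₀)).2 ≤ 0 := by
      rw [stopP] at hstop
      rcases hstop with h | h
      · exact absurd h hcase
      · exact h
    obtain ⟨hv1, hv2, hv3, hv4⟩ := vac_main m n ω t₀ hRall
    obtain ⟨J, hJne, hJnd, hJc, hJP, hJ1, hJM⟩ := extract_crossing (α := ℤ × ℤ)
      (adj := plusAdj) (P := fun x => inRect m n x ∧ ω x = false)
      (pre := fun x => extC m n ω x = false ∧ x.1 ≤ m) (fun k => n + 1 - k.2) n hn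
      (fun a b h => by
        have := plus_unfold h
        show |(n + 1 - a.2) - (n + 1 - b.2)| ≤ 1
        rw [abs_le]; omega)
      (fun x hx h1 h2 => by
        obtain ⟨hv, hcol⟩ := hx
        have h1' : 1 ≤ n + 1 - x.2 := h1
        have h2' : n + 1 - x.2 ≤ n := h2
        rw [vac_iff] at hv
        have hrect : inRect m n x := ⟨hv.1, hcol, by omega, by omega⟩
        exact ⟨hrect, hv.2 hrect⟩)
      (vacL m n ω t₀) (by
        intro h
        rw [h] at hv1
        simp at hv1)
      hv3 hv4
      (fun x hx => by
        rw [hv1] at hx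
        simp at hx
        subst hx
        show n + 1 - (lcell (trajW m n ω 0)).2 ≤ 0
        rw [show lcell (trajW m n ω 0) = (1, n + 1) from rfl]
        omega)
      (fun x hx => by
        rw [hv2] at hx
        simp at hx
        subst hx
        show n ≤ n + 1 - (lcell (trajW m n ω t₀)).2
        omega)
    refine ⟨J, ⟨hJne, hJnd, hJc, fun k hk => (hJP k hk).1, ?_, ?_⟩, fun k hk => (hJP k hk).2⟩
    · intro k hk
      have h1 : n + 1 - k.2 = 1 ↔ J.head? = some k := hJ1 k hk
      constructor
      · intro hkn; exact h1.mp (by omega)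
      · intro hh; have := h1.mpr hh; omega
    · intro k hk
      have h1 : n + 1 - k.2 = n ↔ J.getLast? = some k := hJM k hk
      constructor
      · intro hkn; exact h1.mp (by omega)
      · intro hh; have := h1.mpr hh; omega
end Existence

/-- Exactly one of the following occurs: `Λ` contains an occupied star connected
left-right crossing, or `Λ` contains a vacant plus connected top-down crossing. -/
theorem occupied_star_LR_xor_vacant_plus_TD
    (m n : ℤ) (hm : 1 ≤ m) (hn : 1 ≤ n) (ω : ℤ × ℤ → Bool) :
    Xor' (∃ J : List (ℤ × ℤ), IsLRCrossing starAdj m n J ∧ ∀ k ∈ J, ω k = true)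
         (∃ J : List (ℤ × ℤ), IsTDCrossing plusAdj m n J ∧ ∀ k ∈ J, ω k = false) := by
  rcases exists_crossing m n ω hm hn with hA | hB
  · exact Or.inl ⟨hA, fun hB => no_both m n hm hn ω hA hB⟩
  · exact Or.inr ⟨hB, fun hA => no_both m n hm hn ω hA hB⟩
end

section
/- For every assignment of states (occupied or vacant) to the squares of Λ = {1,…,m} × {1,…,n}, Λ cannot simultaneously contain an occupied star connected left-right crossing and a vacant plus connected top-down crossing. -/
set_option maxHeartbeats 1000000
namespace CrossDual

/-- does the plus-step `(p,q)` cross the leftward ray at height `z.2 - 1/2` from `z`? -/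
def chi (z p q : ℤ × ℤ) : ZMod 2 :=
  if p.1 = q.1 ∧ p.1 < z.1 ∧ ((p.2 = z.2 - 1 ∧ q.2 = z.2) ∨ (p.2 = z.2 ∧ q.2 = z.2 - 1))
  then 1 else 0

/-- the region swept between the rays of star-adjacent `z`, `w`. -/
def psi (z w p : ℤ × ℤ) : ZMod 2 :=
  if p.2 = min z.2 w.2 ∧ p.2 < max z.2 w.2 ∧ p.1 < max z.1 w.1 then 1 else 0

/-- which side of the level `z.2 - 1/2` is `p` on. -/
def sigma (z p : ℤ × ℤ) : ZMod 2 := if p.2 < z.2 then 1 else 0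

/-- bottom boundary correction. -/
def Bfun (l0 z : ℤ × ℤ) : ZMod 2 := if z.2 = 1 ∧ l0.1 < z.1 then 1 else 0

def pairSum (f : ℤ × ℤ → ℤ × ℤ → ZMod 2) : List (ℤ × ℤ) → ZMod 2
  | p :: q :: t => f p q + pairSum f (q :: t)
  | _ => 0

lemma plusAdj_elim {p q : ℤ × ℤ} (h : plusAdj p q) :
    (p.1 = q.1 ∧ (p.2 = q.2 + 1 ∨ q.2 = p.2 + 1)) ∨
    (p.2 = q.2 ∧ (p.1 = q.1 + 1 ∨ q.1 = p.1 + 1)) := by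
  unfold plusAdj at h
  rcases abs_cases (p.1 - q.1) with ⟨h1, _⟩ | ⟨h1, _⟩ <;>
    rcases abs_cases (p.2 - q.2) with ⟨h2, _⟩ | ⟨h2, _⟩ <;> omega

lemma starAdj_elim {z w : ℤ × ℤ} (h : starAdj z w) :
    z.1 - w.1 ≤ 1 ∧ w.1 - z.1 ≤ 1 ∧ z.2 - w.2 ≤ 1 ∧ w.2 - z.2 ≤ 1 ∧
      ¬(z.1 = w.1 ∧ z.2 = w.2) := by
  unfold starAdj at h
  rcases max_cases |z.1 - w.1| |z.2 - w.2| with ⟨h1, h2⟩ | ⟨h1, h2⟩ <;>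
    rcases abs_cases (z.1 - w.1) with ⟨a1, _⟩ | ⟨a1, _⟩ <;>
    rcases abs_cases (z.2 - w.2) with ⟨a2, _⟩ | ⟨a2, _⟩ <;> omega

lemma local_id (z w p q : ℤ × ℤ) (hzw : starAdj z w) (hpq : plusAdj p q)
    (hpz : p ≠ z) (hpw : p ≠ w) (hqz : q ≠ z) (hqw : q ≠ w) :
    chi z p q + chi w p q = psi z w p + psi z w q := by
  have hs := starAdj_elim hzw
  have hp := plusAdj_elim hpq
  rw [Ne, Prod.ext_iff] at hpz hpw hqz hqw
  unfold chi psi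
  split_ifs <;> first | decide | (exfalso; omega)

lemma chain'_mem {α : Type*} {r : α → α → Prop} {p : α → Prop} :
    ∀ {l : List α}, l.Chain' r → (∀ x ∈ l, p x) →
      l.Chain' (fun a b => r a b ∧ p a ∧ p b)
  | [], _, _ => List.isChain_nil
  | [_], _, _ => List.isChain_singleton _
  | a :: b :: t, h, hm => by
      simp only [List.Chain', List.isChain_cons_cons] at h ⊢
      exact ⟨⟨h.1, hm a (by simp), hm b (by simp)⟩,
        chain'_mem h.2 (fun x hx => hm x (by simp [hx]))⟩

lemma chain'_eq {α β : Type*} (g : α → β) :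
    ∀ (l : List α) (hne : l ≠ []), l.Chain' (fun a b => g a = g b) →
      g (l.head hne) = g (l.getLast hne)
  | [a], _, _ => by simp
  | a :: b :: t, _, h => by
      simp only [List.Chain', List.isChain_cons_cons] at h
      have := chain'_eq g (b :: t) (by simp) h.2
      rw [List.head_cons, List.getLast_cons (by simp : (b :: t) ≠ [])]
      rw [h.1]; exact this

lemma tele (f : ℤ × ℤ → ℤ × ℤ → ZMod 2) (s : ℤ × ℤ → ZMod 2) :
    ∀ (P : List (ℤ × ℤ)) (hne : P ≠ []),
      P.Chain' (fun p q => f p q = s p + s q) →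
      pairSum f P = s (P.head hne) + s (P.getLast hne)
  | [a], _, _ => by
      have : ∀ x : ZMod 2, 0 = x + x := by decide
      simpa [pairSum] using this (s a)
  | a :: b :: t, _, h => by
      simp only [List.Chain', List.isChain_cons_cons] at h
      have ht := tele f s (b :: t) (by simp) h.2
      show f a b + pairSum f (b :: t) = _
      rw [ht, h.1, List.head_cons, List.getLast_cons (by simp : (b :: t) ≠ [])]
      have : ∀ x y u : ZMod 2, (x + y) + (y + u) = x + u := by decide
      exact this _ _ _

lemma pairSum_add (f g : ℤ × ℤ → ℤ × ℤ → ZMod 2) :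
    ∀ L : List (ℤ × ℤ),
      pairSum (fun p q => f p q + g p q) L = pairSum f L + pairSum g L
  | [] => by simp [pairSum]
  | [a] => by simp [pairSum]
  | a :: b :: t => by
      show f a b + g a b + pairSum (fun p q => f p q + g p q) (b :: t) = _
      rw [pairSum_add f g (b :: t)]
      show _ = (f a b + pairSum f (b :: t)) + (g a b + pairSum g (b :: t))
      ring

lemma step_lemma (n : ℤ) (P : List (ℤ × ℤ)) (hne : P ≠ [])
    (hch : P.Chain' plusAdj)
    (hhd : (P.head hne).2 = n) (hlt : (P.getLast hne).2 = 1)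
    (z w : ℤ × ℤ) (hzw : starAdj z w)
    (hz : ∀ x ∈ P, x ≠ z) (hw : ∀ x ∈ P, x ≠ w)
    (hz2 : 1 ≤ z.2) (hzn : z.2 ≤ n) (hw2 : 1 ≤ w.2) (hwn : w.2 ≤ n) :
    pairSum (chi z) P + Bfun (P.getLast hne) z
      = pairSum (chi w) P + Bfun (P.getLast hne) w := by
  have hc := chain'_mem (p := fun x => x ≠ z ∧ x ≠ w) hch (fun x hx => ⟨hz x hx, hw x hx⟩)
  have hc2 : P.Chain' (fun p q => chi z p q + chi w p q = psi z w p + psi z w q) :=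
    hc.imp (fun a b hab => local_id z w a b hzw hab.1 hab.2.1.1 hab.2.1.2 hab.2.2.1 hab.2.2.2)
  have key := tele (fun p q => chi z p q + chi w p q) (psi z w) P hne hc2
  rw [pairSum_add] at key
  have hh0 : psi z w (P.head hne) = 0 := by
    unfold psi
    rw [if_neg]
    rintro ⟨h1, h2, h3⟩
    omega
  rw [hh0, zero_add] at key
  have hLz := hz _ (List.getLast_mem hne)
  have hLw := hw _ (List.getLast_mem hne)
  rw [Ne, Prod.ext_iff] at hLz hLw
  have hs := starAdj_elim hzw
  have hfin : psi z w (P.getLast hne) + Bfun (P.getLast hne) z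
      + Bfun (P.getLast hne) w = 0 := by
    unfold psi Bfun
    split_ifs <;> first | decide | (exfalso; omega)
  have habs : ∀ a b c d e : ZMod 2, a + b = c → c + d + e = 0 → a + d = b + e := by decide
  exact habs _ _ _ _ _ key hfin

lemma g_left (P : List (ℤ × ℤ)) (hne : P ≠ []) (hrect : ∀ x ∈ P, 1 ≤ x.1)
    (z : ℤ × ℤ) (hz1 : z.1 = 1) :
    pairSum (chi z) P + Bfun (P.getLast hne) z = 0 := by
  have hB : Bfun (P.getLast hne) z = 0 := by
    unfold Bfun
    rw [if_neg]
    rintro ⟨h1, h2⟩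
    have := hrect _ (List.getLast_mem hne)
    omega
  have hC : ∀ L : List (ℤ × ℤ), (∀ x ∈ L, 1 ≤ x.1) → pairSum (chi z) L = 0 := by
    intro L
    induction L with
    | nil => intro _; rfl
    | cons a t ih =>
      cases t with
      | nil => intro _; rfl
      | cons b t' =>
        intro hL
        show chi z a b + pairSum (chi z) (b :: t') = 0
        have h0 : chi z a b = 0 := by
          unfold chi
          rw [if_neg]
          rintro ⟨h1, h2, h3⟩
          have := hL a (by simp)
          omega
        rw [h0, ih (fun x hx => hL x (by simp [hx])), add_zero]
  rw [hC P hrect, hB, add_zero]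

lemma g_right (m n : ℤ) (P : List (ℤ × ℤ)) (hne : P ≠ [])
    (hch : P.Chain' plusAdj)
    (hrect : ∀ x ∈ P, 1 ≤ x.1 ∧ x.1 ≤ m)
    (hhd : (P.head hne).2 = n) (hlt : (P.getLast hne).2 = 1)
    (z : ℤ × ℤ) (hz1 : z.1 = m) (hz2 : 1 ≤ z.2) (hzn : z.2 ≤ n)
    (hz : ∀ x ∈ P, x ≠ z) :
    pairSum (chi z) P + Bfun (P.getLast hne) z = 1 := by
  have hc := chain'_mem (p := fun x => (1 ≤ x.1 ∧ x.1 ≤ m) ∧ x ≠ z) hch (fun x hx => ⟨hrect x hx, hz x hx⟩)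
  have hc2 : P.Chain' (fun p q => chi z p q = sigma z p + sigma z q) := by
    refine hc.imp (fun a b hab => ?_)
    obtain ⟨hab1, ⟨ham, haz⟩, ⟨hbm, hbz⟩⟩ := hab
    have hp := plusAdj_elim hab1
    rw [Ne, Prod.ext_iff] at haz hbz
    unfold chi sigma
    split_ifs <;> first | decide | (exfalso; omega)
  have ht := tele (chi z) (sigma z) P hne hc2
  rw [ht]
  have hLz := hz _ (List.getLast_mem hne)
  rw [Ne, Prod.ext_iff] at hLz
  have hLm := hrect _ (List.getLast_mem hne)
  unfold sigma Bfun
  split_ifs <;> first | decide | (exfalso; omega)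

end CrossDual

/-- `Λ` cannot simultaneously contain an occupied star connected left-right crossing
and a vacant plus connected top-down crossing. -/
theorem not_occupied_star_LR_and_vacant_plus_TD
    (m n : ℤ) (hm : 1 ≤ m) (hn : 1 ≤ n) (ω : ℤ × ℤ → Bool) :
    ¬ ((∃ J : List (ℤ × ℤ), IsLRCrossing starAdj m n J ∧ ∀ k ∈ J, ω k = true) ∧
       (∃ J : List (ℤ × ℤ), IsTDCrossing plusAdj m n J ∧ ∀ k ∈ J, ω k = false)) := by
  rintro ⟨⟨Q, ⟨hQne, hQnd, hQch, hQrect, hQhead, hQlast⟩, hQocc⟩,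
          ⟨P, ⟨hPne, hPnd, hPch, hPrect, hPhead, hPlast⟩, hPvac⟩⟩
  -- squares of Q are not on P
  have hdisj : ∀ k ∈ Q, ∀ x ∈ P, x ≠ k := by
    intro k hk x hx he
    have h1 := hPvac x hx
    have h2 := hQocc k hk
    rw [he, h2] at h1
    exact absurd h1 (by decide)
  -- endpoints of P
  have hPhd : (P.head hPne).2 = n :=
    (hPhead _ (List.head_mem hPne)).mpr (List.head?_eq_head hPne)
  have hPlt : (P.getLast hPne).2 = 1 :=
    (hPlast _ (List.getLast_mem hPne)).mpr (List.getLast?_eq_getLast hPne)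
  -- endpoints of Q
  have hQhd : (Q.head hQne).1 = 1 :=
    (hQhead _ (List.head_mem hQne)).mpr (List.head?_eq_head hQne)
  have hQlt : (Q.getLast hQne).1 = m :=
    (hQlast _ (List.getLast_mem hQne)).mpr (List.getLast?_eq_getLast hQne)
  -- the mod-2 crossing potential
  set g : ℤ × ℤ → ZMod 2 :=
    fun z => CrossDual.pairSum (CrossDual.chi z) P + CrossDual.Bfun (P.getLast hPne) z
    with hg
  -- g is constant along Q
  have hQc := CrossDual.chain'_mem
      (p := fun x => inRect m n x ∧ ∀ y ∈ P, y ≠ x) hQch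
      (fun x hx => ⟨hQrect x hx, fun y hy => hdisj x hx y hy⟩)
  have hGch : Q.Chain' (fun a b => g a = g b) := by
    refine hQc.imp (fun a b hab => ?_)
    obtain ⟨hab1, ⟨har, haP⟩, ⟨hbr, hbP⟩⟩ := hab
    exact CrossDual.step_lemma n P hPne hPch hPhd hPlt a b hab1 haP hbP
      har.2.2.1 har.2.2.2 hbr.2.2.1 hbr.2.2.2
  have hconst := CrossDual.chain'_eq g Q hQne hGch
  -- value at the two ends
  have h0 : g (Q.head hQne) = 0 :=
    CrossDual.g_left P hPne (fun x hx => (hPrect x hx).1) _ hQhd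
  have hrQl := hQrect _ (List.getLast_mem hQne)
  have h1 : g (Q.getLast hQne) = 1 :=
    CrossDual.g_right m n P hPne hPch
      (fun x hx => ⟨(hPrect x hx).1, (hPrect x hx).2.1⟩) hPhd hPlt _
      hQlt hrQl.2.2.1 hrQl.2.2.2 (fun x hx => hdisj _ (List.getLast_mem hQne) x hx)
  rw [h0, h1] at hconst
  exact absurd hconst (by decide)
end

section
/- For every assignment of states (occupied or vacant) to the squares of Λ = {1,…,m} × {1,…,n}, Λ cannot simultaneously contain an occupied plus connected left-right crossing and a vacant star connected top-down crossing. -/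
namespace CrossAux

variable {α : Type*}

/-- The list of consecutive steps of a list. -/
def steps (l : List α) : List (α × α) := l.zip l.tail

lemma steps_cons_cons (a b : α) (t : List α) :
    steps (a :: b :: t) = (a, b) :: steps (b :: t) := rfl

lemma chain'_steps {R : α → α → Prop} :
    ∀ (l : List α), l.Chain' R → ∀ p ∈ steps l, R p.1 p.2
  | [], _, p, hp => by simp [steps] at hp
  | [a], _, p, hp => by simp [steps] at hp
  | a :: b :: t, h, p, hp => by
      simp only [List.Chain', List.isChain_cons_cons] at h
      rw [steps_cons_cons, List.mem_cons] at hp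
      rcases hp with rfl | hp
      · exact h.1
      · exact chain'_steps (b :: t) h.2 p hp

lemma mem_of_mem_steps {l : List α} {p : α × α} (hp : p ∈ steps l) :
    p.1 ∈ l ∧ p.2 ∈ l := by
  obtain ⟨x, y⟩ := p
  have := List.of_mem_zip hp
  exact ⟨this.1, List.tail_subset l this.2⟩

lemma flip_parity (f : α → Bool) :
    ∀ (l : List α) (a : α),
      (steps (a :: l)).countP (fun s => f s.1 != f s.2) % 2
        = if f a = f ((a :: l).getLast (by simp)) then 0 else 1
  | [], a => by simp [steps]
  | b :: t, a => by
      have ih := flip_parity f t b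
      rw [steps_cons_cons, List.countP_cons]
      have hlast : (a :: b :: t).getLast (by simp) = (b :: t).getLast (by simp) :=
        List.getLast_cons (by simp)
      rw [hlast]
      rcases hfa : f a <;> rcases hfb : f b <;>
        rcases hfl : f ((b :: t).getLast (by simp)) <;>
        simp [hfa, hfb, hfl] at ih ⊢ <;> omega

lemma flip_parity' (f : α → Bool) (l : List α) (a b : α)
    (hb : (a :: l).getLast? = some b) :
    (steps (a :: l)).countP (fun s => f s.1 != f s.2) % 2
      = if f a = f b then 0 else 1 := by
  have h0 := flip_parity f l a
  have hb' : (a :: l).getLast (by simp) = b := by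
    rw [List.getLast?_eq_getLast (by simp : a :: l ≠ [])] at hb
    exact Option.some_inj.mp hb
  rwa [hb'] at h0

lemma countP_or_disj (p q : α → Bool) :
    ∀ (l : List α), (∀ a ∈ l, ¬(p a = true ∧ q a = true)) →
      l.countP (fun a => p a || q a) = l.countP p + l.countP q
  | [], _ => by simp
  | a :: t, h => by
      have ih := countP_or_disj p q t (fun x hx => h x (List.mem_cons_of_mem _ hx))
      have ha := h a (List.mem_cons_self)
      simp only [List.countP_cons, ih]
      rcases hp : p a <;> rcases hq : q a <;> simp [hp, hq] at ha ⊢ <;> omega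

lemma chain'_imp_mem {R S : α → α → Prop} :
    ∀ (l : List α), l.Chain' R → (∀ a ∈ l, ∀ b ∈ l, R a b → S a b) → l.Chain' S
  | [], _, _ => List.isChain_nil
  | [a], _, _ => by simp [List.Chain']
  | a :: b :: t, h, hm => by
      simp only [List.Chain', List.isChain_cons_cons] at h ⊢
      refine ⟨hm a (by simp) b (by simp) h.1, chain'_imp_mem (b :: t) h.2 ?_⟩
      intro x hx y hy
      exact hm x (List.mem_cons_of_mem _ hx) y (List.mem_cons_of_mem _ hy)

lemma chain'_g_eq (g : α → ℕ) :
    ∀ (l : List α) (h : l ≠ []), l.Chain' (fun a b => g a = g b) →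
      g (l.head h) = g (l.getLast h)
  | [], h, _ => absurd rfl h
  | [a], _, _ => rfl
  | a :: b :: t, _, hc => by
      simp only [List.Chain', List.isChain_cons_cons] at hc
      have := chain'_g_eq g (b :: t) (by simp) hc.2
      rw [List.head_cons, List.getLast_cons (by simp : (b::t) ≠ [])]
      exact hc.1.trans this

end CrossAux

open CrossAux

/-- crossing indicator: step s crosses the level y - 1/2 strictly left of x. -/
def crossB (x y : ℤ) (s : (ℤ × ℤ) × (ℤ × ℤ)) : Bool :=
  decide ((((s.1).2 = y - 1 ∧ (s.2).2 = y) ∨ ((s.1).2 = y ∧ (s.2).2 = y - 1))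
    ∧ (s.1).1 + (s.2).1 < 2 * x)


/-- `Λ` cannot simultaneously contain an occupied plus connected left-right crossing
and a vacant star connected top-down crossing. -/
theorem not_occupied_plus_LR_and_vacant_star_TD
    (m n : ℤ) (hm : 1 ≤ m) (hn : 1 ≤ n) (ω : ℤ × ℤ → Bool) :
    ¬ ((∃ J : List (ℤ × ℤ), IsLRCrossing plusAdj m n J ∧ ∀ k ∈ J, ω k = true) ∧
       (∃ J : List (ℤ × ℤ), IsTDCrossing starAdj m n J ∧ ∀ k ∈ J, ω k = false)) := by
  rintro ⟨⟨P, ⟨hPne, hPnd, hPch, hPrect, hPhead, hPlast⟩, hPocc⟩,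
          ⟨Q, ⟨hQne, hQnd, hQch, hQrect, hQhead, hQlast⟩, hQvac⟩⟩
  have hdisj : ∀ k ∈ P, k ∉ Q := by
    intro k hk hkQ
    have h1 := hPocc k hk
    have h2 := hQvac k hkQ
    rw [h1] at h2; exact Bool.noConfusion h2
  set qh := Q.head hQne with hqh
  set ql := Q.getLast hQne with hql
  have hqhQ : qh ∈ Q := List.head_mem hQne
  have hqlQ : ql ∈ Q := List.getLast_mem hQne
  have hqh2 : qh.2 = n := (hQhead qh hqhQ).mpr (List.head?_eq_head hQne)
  have hql2 : ql.2 = 1 := (hQlast ql hqlQ).mpr (List.getLast?_eq_getLast hQne)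
  set Lr : List (ℤ × ℤ) := Q ++ [(ql.1, 0)] with hLr
  set L : List (ℤ × ℤ) := (qh.1, n + 1) :: Lr with hLdef
  set S := steps L with hSdef
  -- membership facts
  have hLmem : ∀ p ∈ L, p = (qh.1, n + 1) ∨ p ∈ Q ∨ p = (ql.1, 0) := by
    intro p hp
    simp only [hLdef, hLr, List.mem_cons, List.mem_append, List.mem_singleton] at hp
    tauto
  have hLx : ∀ p ∈ L, 1 ≤ p.1 ∧ p.1 ≤ m := by
    intro p hp
    rcases hLmem p hp with rfl | hp | rfl
    · exact ⟨(hQrect qh hqhQ).1, (hQrect qh hqhQ).2.1⟩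
    · exact ⟨(hQrect p hp).1, (hQrect p hp).2.1⟩
    · exact ⟨(hQrect ql hqlQ).1, (hQrect ql hqlQ).2.1⟩
  have hLreal : ∀ p ∈ L, 1 ≤ p.2 → p.2 ≤ n → p ∈ Q := by
    intro p hp h1 h2
    rcases hLmem p hp with rfl | hp | rfl
    · simp at h2
    · exact hp
    · simp at h1
  -- chain bounds on steps
  have hQch' : Q.Chain' (fun p q : ℤ × ℤ => |p.1 - q.1| ≤ 1 ∧ |p.2 - q.2| ≤ 1) := by
    refine List.IsChain.imp ?_ hQch
    intro a b h
    unfold starAdj at h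
    exact ⟨h ▸ le_max_left _ _, h ▸ le_max_right _ _⟩
  have hQh? : Q.head? = some qh := List.head?_eq_head hQne
  have hQl? : Q.getLast? = some ql := List.getLast?_eq_getLast hQne
  have hLch : L.Chain' (fun p q : ℤ × ℤ => |p.1 - q.1| ≤ 1 ∧ |p.2 - q.2| ≤ 1) := by
    rw [hLdef]; simp only [List.Chain', List.isChain_cons]
    constructor
    · intro y hy
      rw [hLr] at hy
      rw [List.head?_append_of_ne_nil _ hQne, hQh?] at hy
      obtain rfl := Option.mem_some_iff.mp hy
      constructor
      · simp
      · rw [hqh2]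
        simp
    · rw [hLr]; simp only [List.isChain_append]
      refine ⟨hQch', List.isChain_singleton _, ?_⟩
      intro x hx y hy
      rw [hQl?] at hx
      obtain rfl := Option.mem_some_iff.mp hx
      simp only [List.head?_cons] at hy
      obtain rfl := Option.mem_some_iff.mp hy
      constructor
      · simp
      · simp only []
        rw [hql2]
        simp
  have hSgood : ∀ s ∈ S, |(s.1).1 - (s.2).1| ≤ 1 ∧ |(s.1).2 - (s.2).2| ≤ 1 :=
    chain'_steps L hLch
  have hSmem : ∀ s ∈ S, s.1 ∈ L ∧ s.2 ∈ L := fun s hs => mem_of_mem_steps hs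
  have hLlast? : L.getLast? = some (ql.1, 0) := by
    have h2 : L = ((qh.1, n + 1) :: Q) ++ [(ql.1, 0)] := by
      rw [hLdef, hLr]; simp
    rw [h2]
    exact List.getLast?_concat
  -- the crossing count
  set N : ℤ → ℤ → ℕ := fun x y => S.countP (crossB x y) with hN
  -- (A) at column 1 the count is zero
  have hA : ∀ y : ℤ, N 1 y = 0 := by
    intro y
    refine List.countP_eq_zero.mpr ?_
    intro s hs hcr
    simp only [crossB, decide_eq_true_eq] at hcr
    have h1 := (hLx _ (hSmem s hs).1).1
    have h2 := (hLx _ (hSmem s hs).2).1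
    omega
  -- (B) at column m the count is odd
  have hB : ∀ y : ℤ, 1 ≤ y → y ≤ n → (m, y) ∉ Q → N m y % 2 = 1 := by
    intro y hy1 hy2 hnotin
    have hflip := flip_parity' (fun p : ℤ × ℤ => decide (y ≤ p.2)) Lr (qh.1, n + 1)
      (ql.1, 0) hLlast?
    have hiftrue : (if (decide (y ≤ ((qh.1, n + 1) : ℤ × ℤ).2)
        = decide (y ≤ ((ql.1, 0) : ℤ × ℤ).2)) then 0 else 1) = 1 := by
      simp only []
      rw [decide_eq_true (by omega : y ≤ n + 1), decide_eq_false (by omega : ¬ y ≤ (0:ℤ))]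
      simp
    rw [hiftrue] at hflip
    have hcongr : S.countP (crossB m y)
        = S.countP (fun s => (decide (y ≤ (s.1).2)) != (decide (y ≤ (s.2).2))) := by
      refine List.countP_congr ?_
      intro s hs
      have hg1 := abs_le.mp (hSgood s hs).1
      have hg2 := abs_le.mp (hSgood s hs).2
      have hx1 := hLx _ (hSmem s hs).1
      have hx2 := hLx _ (hSmem s hs).2
      have k1 : ¬((s.1).1 = m ∧ (s.1).2 = y) := by
        rintro ⟨e1, e2⟩
        apply hnotin
        have hq : s.1 ∈ Q := hLreal _ (hSmem s hs).1 (by omega) (by omega)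
        have : (m, y) = s.1 := by rw [← e1, ← e2]
        rwa [this]
      have k2 : ¬((s.2).1 = m ∧ (s.2).2 = y) := by
        rintro ⟨e1, e2⟩
        apply hnotin
        have hq : s.2 ∈ Q := hLreal _ (hSmem s hs).2 (by omega) (by omega)
        have : (m, y) = s.2 := by rw [← e1, ← e2]
        rwa [this]
      simp only [crossB, decide_eq_true_eq, bne_iff_ne, ne_eq, decide_eq_decide]
      omega
    show S.countP (crossB m y) % 2 = 1
    rw [hcongr]
    exact hflip
  -- (C) horizontal invariance
  have hC : ∀ x y : ℤ, 1 ≤ y → y ≤ n → (x, y) ∉ Q → (x + 1, y) ∉ Q →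
      N x y = N (x + 1) y := by
    intro x y hy1 hy2 hn1 hn2
    refine List.countP_congr ?_
    intro s hs
    have hg1 := abs_le.mp (hSgood s hs).1
    have hg2 := abs_le.mp (hSgood s hs).2
    have k1 : ¬((s.1).2 = y ∧ ((s.1).1 = x ∨ (s.1).1 = x + 1)) := by
      rintro ⟨e2, e1 | e1⟩
      · apply hn1
        have hq : s.1 ∈ Q := hLreal _ (hSmem s hs).1 (by omega) (by omega)
        have : (x, y) = s.1 := by rw [← e1, ← e2]
        rwa [this]
      · apply hn2
        have hq : s.1 ∈ Q := hLreal _ (hSmem s hs).1 (by omega) (by omega)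
        have : (x + 1, y) = s.1 := by rw [← e1, ← e2]
        rwa [this]
    have k2 : ¬((s.2).2 = y ∧ ((s.2).1 = x ∨ (s.2).1 = x + 1)) := by
      rintro ⟨e2, e1 | e1⟩
      · apply hn1
        have hq : s.2 ∈ Q := hLreal _ (hSmem s hs).2 (by omega) (by omega)
        have : (x, y) = s.2 := by rw [← e1, ← e2]
        rwa [this]
      · apply hn2
        have hq : s.2 ∈ Q := hLreal _ (hSmem s hs).2 (by omega) (by omega)
        have : (x + 1, y) = s.2 := by rw [← e1, ← e2]
        rwa [this]
    simp only [crossB, decide_eq_true_eq]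
    omega
  -- (D) vertical invariance
  have hD : ∀ x y : ℤ, 1 ≤ y → y + 1 ≤ n → (x, y) ∉ Q → N x y % 2 = N x (y + 1) % 2 := by
    intro x y hy1 hy2 hxy
    have hflip := flip_parity' (fun p : ℤ × ℤ => decide (p.2 = y ∧ p.1 < x)) Lr
      (qh.1, n + 1) (ql.1, 0) hLlast?
    have hiftrue : (if (decide (((qh.1, n + 1) : ℤ × ℤ).2 = y ∧ ((qh.1, n + 1) : ℤ × ℤ).1 < x)
        = decide (((ql.1, 0) : ℤ × ℤ).2 = y ∧ ((ql.1, 0) : ℤ × ℤ).1 < x)) then 0 else 1)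
        = (0 : ℕ) := by
      simp only []
      rw [decide_eq_false (by omega : ¬((n + 1 : ℤ) = y ∧ qh.1 < x)),
        decide_eq_false (by omega : ¬(((0:ℤ)) = y ∧ ql.1 < x))]
      simp
    rw [hiftrue] at hflip
    have hdisj2 : ∀ s ∈ S, ¬(crossB x y s = true ∧ crossB x (y + 1) s = true) := by
      intro s hs ⟨h1, h2⟩
      simp only [crossB, decide_eq_true_eq] at h1 h2
      omega
    have hsplit := countP_or_disj (crossB x y) (crossB x (y + 1)) S hdisj2
    have hcongr : S.countP (fun s => crossB x y s || crossB x (y + 1) s)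
        = S.countP (fun s => (decide ((s.1).2 = y ∧ (s.1).1 < x))
            != (decide ((s.2).2 = y ∧ (s.2).1 < x))) := by
      refine List.countP_congr ?_
      intro s hs
      have hg1 := abs_le.mp (hSgood s hs).1
      have hg2 := abs_le.mp (hSgood s hs).2
      have k1 : (s.1).2 = y → (s.1).1 ≠ x := by
        intro e2 e1
        apply hxy
        have hq : s.1 ∈ Q := hLreal _ (hSmem s hs).1 (by omega) (by omega)
        have : (x, y) = s.1 := by rw [← e1, ← e2]
        rwa [this]
      have k2 : (s.2).2 = y → (s.2).1 ≠ x := by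
        intro e2 e1
        apply hxy
        have hq : s.2 ∈ Q := hLreal _ (hSmem s hs).2 (by omega) (by omega)
        have : (x, y) = s.2 := by rw [← e1, ← e2]
        rwa [this]
      simp only [crossB, Bool.or_eq_true, decide_eq_true_eq, bne_iff_ne, ne_eq,
        decide_eq_decide]
      omega
    have hfin : (S.countP (crossB x y) + S.countP (crossB x (y + 1))) % 2 = 0 := by
      rw [← hsplit, hcongr]
      exact hflip
    show S.countP (crossB x y) % 2 = S.countP (crossB x (y + 1)) % 2
    omega
  -- transport the parity along P
  set g : ℤ × ℤ → ℕ := fun k => N k.1 k.2 % 2 with hg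
  have hPg : P.Chain' (fun a b => g a = g b) := by
    refine chain'_imp_mem P hPch ?_
    intro a ha b hb hab
    have hra := hPrect a ha
    have hrb := hPrect b hb
    have hna := hdisj a ha
    have hnb := hdisj b hb
    have hea : (a.1, a.2) = a := rfl
    have heb : (b.1, b.2) = b := rfl
    unfold plusAdj at hab
    obtain ⟨ira1, ira2, ira3, ira4⟩ := hra
    obtain ⟨irb1, irb2, irb3, irb4⟩ := hrb
    have hcase : (b.1 = a.1 + 1 ∧ b.2 = a.2) ∨ (a.1 = b.1 + 1 ∧ a.2 = b.2)
        ∨ (b.2 = a.2 + 1 ∧ b.1 = a.1) ∨ (a.2 = b.2 + 1 ∧ a.1 = b.1) := by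
      rcases abs_cases (a.1 - b.1) with h1 | h1 <;>
        rcases abs_cases (a.2 - b.2) with h2 | h2 <;> omega
    show N a.1 a.2 % 2 = N b.1 b.2 % 2
    rcases hcase with ⟨e1, e2⟩ | ⟨e1, e2⟩ | ⟨e1, e2⟩ | ⟨e1, e2⟩
    · rw [e1, e2]
      rw [hC a.1 a.2 ira3 ira4 (hea ▸ hna) (by
        have : ((a.1 + 1 : ℤ), a.2) = b := by rw [← e1, ← e2]
        rw [this]; exact hnb)]
    · rw [e1, e2]
      rw [hC b.1 b.2 irb3 irb4 (heb ▸ hnb) (by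
        have : ((b.1 + 1 : ℤ), b.2) = a := by rw [← e1, ← e2]
        rw [this]; exact hna)]
    · rw [e1, e2]
      exact hD a.1 a.2 ira3 (by omega) (hea ▸ hna)
    · rw [e1, e2]
      exact (hD b.1 b.2 irb3 (by omega) (heb ▸ hnb)).symm
  have hheadlast := chain'_g_eq g P hPne hPg
  have hh1 : (P.head hPne).1 = 1 :=
    (hPhead _ (List.head_mem hPne)).mpr (List.head?_eq_head hPne)
  have hl1 : (P.getLast hPne).1 = m :=
    (hPlast _ (List.getLast_mem hPne)).mpr (List.getLast?_eq_getLast hPne)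
  have hlrect := hPrect _ (List.getLast_mem hPne)
  have hgh : g (P.head hPne) = 0 := by
    simp only [hg, hh1, hA]
  have hgl : g (P.getLast hPne) = 1 := by
    have hnq : (m, (P.getLast hPne).2) ∉ Q := by
      have heq : (m, (P.getLast hPne).2) = P.getLast hPne := by rw [← hl1]
      rw [heq]
      exact hdisj _ (List.getLast_mem hPne)
    simp only [hg, hl1]
    exact hB _ hlrect.2.2.1 hlrect.2.2.2 hnq
  rw [hheadlast, hgl] at hgh
  exact Nat.noConfusion hgh
end
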